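/- arXiv:1907.04836 — 10 statements merged into one kernel-verified Lean document; each statement's English description precedes it below -/
import Mathlib

section
/- Let z̃ ∈ ℂ satisfy c·z̃ − a ≠ 0 and z̃ ≠ z̃_α for every α. Then (ad−bc)/(c·z̃−a)² · ( Σ_{α=1}^{n} Σ_{p=0}^{m_α−1} ℓ^α_p/( f⁻¹(z̃) − z_α)^{p+1} − ℓ^∞ ) = Σ_{α=1}^{n} Σ_{p=0}^{m_α−1} ℓ̃^α_p/(z̃−z̃_α)^{p+1} + ℓ̃^{(∞)}_0/(z̃ − a/c) + ℓ̃^{(∞)}_1/(z̃ − a/c)², where f⁻¹(z̃) = −(d·z̃−b)/(c·z̃−a), ℓ̃^{(∞)}_0 = −Σ_{α=1}^{n} ℓ^α_0 and ℓ̃^{(∞)}_1 = −ℓ^∞(ad−bc)/c². That is, the twist function with a constant term (a double pole at infinity), rewritten in the coordinate z̃ = f(z), acquires an additional site of multiplicity two at z̃ = a/c with levels ℓ̃^{(∞)}_0 and ℓ̃^{(∞)}_1. -/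
open Finset

private lemma habs (E D L X P : ℂ) (hE : E ≠ 0) (hP : P ≠ 0) :
    D / E ^ 2 * (L * (X * E ^ 2) / P) = D * L * X / P := by
  field_simp

private lemma perp (a b c d z w : ℂ) (hA : c * z + d ≠ 0) (hE : c * w - a ≠ 0)
    (hu : w - (a * z + b) / (c * z + d) ≠ 0) (p : ℕ) (hp : 1 ≤ p) (L : ℂ) :
    (a * d - b * c) / (c * w - a) ^ 2 * (L / (-((d * w - b) / (c * w - a)) - z) ^ (p + 1))
      = ∑ q ∈ Finset.Icc 1 p,
          ((p - 1).choose (q - 1) : ℂ) * (-c) ^ (p - q) * (a * d - b * c) ^ q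
            / (c * z + d) ^ (q + p) * L / (w - (a * z + b) / (c * z + d)) ^ (q + 1) := by
  obtain ⟨t, rfl⟩ : ∃ t, p = t + 1 := ⟨p - 1, by omega⟩
  have h1 : -((d * w - b) / (c * w - a)) - z
      = ((c * z + d) * (w - (a * z + b) / (c * z + d))) / (-(c * w - a)) := by
    rw [div_neg, mul_sub, mul_div_cancel₀ _ hA, show (c*z+d)*w - (a*z+b) = (d*w-b) + z*(c*w-a) by ring, add_div, mul_div_cancel_right₀ _ hE]; ring
  have h4 : (-(c * w - a)) * (c * z + d)
      = -((c * z + d) * c * (w - (a * z + b) / (c * z + d))) + (a * d - b * c) := by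
    field_simp; ring
  rw [h1]
  generalize hUU : w - (a * z + b) / (c * z + d) = U at h4 hu ⊢
  have h5 : (-(c * w - a)) ^ t
      = ((-((c * z + d) * c * U)) + (a * d - b * c)) ^ t / (c * z + d) ^ t := by
    rw [eq_div_iff (pow_ne_zero _ hA), ← mul_pow, h4]
  have hP : ((c * z + d) * U) ^ (t + 2) ≠ 0 := pow_ne_zero _ (mul_ne_zero hA hu)
  rw [div_pow, div_div_eq_mul_div]
  rw [show (-(c * w - a)) ^ (t + 2) = (-(c * w - a)) ^ t * (c * w - a) ^ 2 by
    rw [pow_add]; ring]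
  rw [habs _ _ _ _ _ hE hP, h5, add_pow, ← mul_div_assoc, div_div, Finset.mul_sum,
    Finset.sum_div]
  rw [show Finset.Icc 1 (t + 1) = Finset.Ico 1 (t + 2) from (Finset.Ico_add_one_right_eq_Icc 1 (t + 1)).symm,
    Finset.sum_Ico_eq_sum_range]
  simp only [show t + 2 - 1 = t + 1 from rfl]
  rw [← Finset.sum_range_reflect]
  refine Finset.sum_congr rfl fun i hi => ?_
  rw [Finset.mem_range] at hi
  obtain ⟨s, rfl⟩ : ∃ s, t = i + s := ⟨t - i, by omega⟩
  have e6 : i + s - i = s := by omega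
  have e3 : i + s - s = i := by omega
  have e4 : 1 + i - 1 = i := by omega
  have e5 : i + s + 1 - (1 + i) = s := by omega
  simp only [show i + s + 1 - 1 = i + s from rfl, e6, e3, e4, e5]
  have hcs : (((i + s).choose s : ℕ) : ℂ) = ((i + s).choose i : ℕ) := by
    have h := Nat.choose_symm (Nat.le_add_right i s)
    rw [show i + s - i = s by omega] at h
    exact_mod_cast congrArg (fun k : ℕ => (k : ℂ)) h
  rw [hcs, show -((c * z + d) * c * U) = (-c) * ((c * z + d) * U) by ring, mul_pow]
  simp only [mul_pow]
  field_simp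
  ring

private lemma pera (m : ℕ) (hm : 1 ≤ m) (ℓ : ℕ → ℂ) (a b c d z w : ℂ)
    (hc : c ≠ 0) (hA : c * z + d ≠ 0) (hE : c * w - a ≠ 0)
    (hu : w - (a * z + b) / (c * z + d) ≠ 0) :
    (a * d - b * c) / (c * w - a) ^ 2
        * ∑ p ∈ Finset.range m, ℓ p / (-((d * w - b) / (c * w - a)) - z) ^ (p + 1)
      = (ℓ 0 / (w - (a * z + b) / (c * z + d)) - ℓ 0 / (w - a / c))
        + ∑ q ∈ Finset.Icc 1 (m - 1),
            (∑ k ∈ Finset.Icc q (m - 1),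
              ((k - 1).choose (q - 1) : ℂ) * (-c) ^ (k - q) * (a * d - b * c) ^ q
                / (c * z + d) ^ (q + k) * ℓ k)
              / (w - (a * z + b) / (c * z + d)) ^ (q + 1) := by
  obtain ⟨M, rfl⟩ : ∃ M, m = M + 1 := ⟨m - 1, by omega⟩
  simp only [Nat.add_sub_cancel]
  rw [Finset.sum_range_succ', mul_add]
  have hwac : w - a / c ≠ 0 := by
    intro h; apply hE; rw [sub_eq_zero] at h; rw [h]; field_simp; ring
  have h0 : (a * d - b * c) / (c * w - a) ^ 2
        * (ℓ 0 / (-((d * w - b) / (c * w - a)) - z) ^ (0 + 1))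
      = ℓ 0 / (w - (a * z + b) / (c * z + d)) - ℓ 0 / (w - a / c) := by
    have h1 : -((d * w - b) / (c * w - a)) - z
        = ((c * z + d) * (w - (a * z + b) / (c * z + d))) / (-(c * w - a)) := by
      rw [div_neg, mul_sub, mul_div_cancel₀ _ hA, show (c*z+d)*w - (a*z+b) = (d*w-b) + z*(c*w-a) by ring, add_div, mul_div_cancel_right₀ _ hE]; ring
    have hD : a * d - b * c
        = (c * z + d) * c * ((w - (a * z + b) / (c * z + d)) - (w - a / c)) := by
      field_simp
      ring
    have hEV : c * w - a = c * (w - a / c) := by field_simp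
    rw [pow_one, h1, hD, hEV]
    generalize w - (a * z + b) / (c * z + d) = U at hu ⊢
    generalize w - a / c = V at hwac ⊢
    field_simp
    ring
  rw [h0, add_comm]
  congr 1
  rw [Finset.mul_sum]
  rw [Finset.sum_congr rfl fun i (hi : i ∈ Finset.range M) =>
    perp a b c d z w hA hE hu (i + 1) (by omega) (ℓ (i + 1))]
  rw [show (∑ i ∈ Finset.range M, ∑ q ∈ Finset.Icc 1 (i + 1),
        ((i + 1 - 1).choose (q - 1) : ℂ) * (-c) ^ (i + 1 - q) * (a * d - b * c) ^ q
          / (c * z + d) ^ (q + (i + 1)) * ℓ (i + 1)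
          / (w - (a * z + b) / (c * z + d)) ^ (q + 1))
      = ∑ p ∈ Finset.Icc 1 M, ∑ q ∈ Finset.Icc 1 p,
        ((p - 1).choose (q - 1) : ℂ) * (-c) ^ (p - q) * (a * d - b * c) ^ q
          / (c * z + d) ^ (q + p) * ℓ p
          / (w - (a * z + b) / (c * z + d)) ^ (q + 1) by
    rw [show Finset.Icc 1 M = Finset.Ico 1 (M + 1) from (Finset.Ico_add_one_right_eq_Icc _ _).symm,
      Finset.sum_Ico_eq_sum_range]
    simp only [show M + 1 - 1 = M from rfl]
    exact Finset.sum_congr rfl fun i _ => by rw [Nat.add_comm 1 i]]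
  rw [Finset.sum_comm' (s := Finset.Icc 1 M) (t := fun p => Finset.Icc 1 p)
    (s' := fun q => Finset.Icc q M) (t' := Finset.Icc 1 M)
    (fun p q => by simp only [Finset.mem_Icc]; omega)]
  exact Finset.sum_congr rfl fun q hq => by rw [Finset.sum_div]

/-- The twist function with a constant term `-ℓ^∞` (a double pole at infinity), rewritten
in the coordinate `z̃ = f(z) = (az+b)/(cz+d)` with `c ≠ 0`, acquires an additional site of
multiplicity two at `z̃ = a/c` with levels `ℓ̃^{(∞)}_0 = -∑_α ℓ^α_0` and
`ℓ̃^{(∞)}_1 = -ℓ^∞ (ad-bc)/c²`. -/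
theorem statement1 (n : ℕ) (z : Fin n → ℂ) (m : Fin n → ℕ) (hm : ∀ α, 1 ≤ m α)
    (ℓ : Fin n → ℕ → ℂ) (linf : ℂ) (a b c d : ℝ)
    (hdet : (a : ℂ) * d - b * c ≠ 0) (hc : (c : ℂ) ≠ 0)
    (hfin : ∀ α, (c : ℂ) * z α + d ≠ 0)
    (zt : Fin n → ℂ)
    (hzt : ∀ α, zt α = ((a : ℂ) * z α + b) / ((c : ℂ) * z α + d))
    (ℓt : Fin n → ℕ → ℂ)
    (hℓt0 : ∀ α, ℓt α 0 = ℓ α 0)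
    (hℓtp : ∀ α p, 1 ≤ p → p ≤ m α - 1 →
      ℓt α p = ∑ k ∈ Finset.Icc p (m α - 1),
        (Nat.choose (k - 1) (p - 1) : ℂ) * (-(c : ℂ)) ^ (k - p) * ((a : ℂ) * d - b * c) ^ p
          / ((c : ℂ) * z α + d) ^ (p + k) * ℓ α k)
    (w : ℂ) (hw1 : (c : ℂ) * w - a ≠ 0) (hw2 : ∀ α, w ≠ zt α) :
    ((a : ℂ) * d - b * c) / ((c : ℂ) * w - a) ^ 2 *
        ((∑ α, ∑ p ∈ Finset.range (m α),
          ℓ α p / (-(((d : ℂ) * w - b) / ((c : ℂ) * w - a)) - z α) ^ (p + 1)) - linf)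
      = (∑ α, ∑ p ∈ Finset.range (m α), ℓt α p / (w - zt α) ^ (p + 1))
        + (-(∑ α, ℓ α 0)) / (w - (a : ℂ) / c)
        + (-(linf * ((a : ℂ) * d - b * c) / (c : ℂ) ^ 2)) / (w - (a : ℂ) / c) ^ 2 := by
  have hwac : w - (a : ℂ) / c ≠ 0 := by
    intro h; apply hw1; rw [sub_eq_zero] at h; rw [h]; field_simp; ring
  have hu : ∀ α, w - ((a : ℂ) * z α + b) / ((c : ℂ) * z α + d) ≠ 0 := fun α => by
    rw [← hzt α]; exact sub_ne_zero.mpr (hw2 α)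
  -- rewrite RHS inner sums
  have hR : ∀ α, ∑ p ∈ Finset.range (m α), ℓt α p / (w - zt α) ^ (p + 1)
      = ℓ α 0 / (w - ((a : ℂ) * z α + b) / ((c : ℂ) * z α + d))
        + ∑ q ∈ Finset.Icc 1 (m α - 1),
            (∑ k ∈ Finset.Icc q (m α - 1),
              ((k - 1).choose (q - 1) : ℂ) * (-(c : ℂ)) ^ (k - q) * ((a : ℂ) * d - b * c) ^ q
                / ((c : ℂ) * z α + d) ^ (q + k) * ℓ α k)
              / (w - ((a : ℂ) * z α + b) / ((c : ℂ) * z α + d)) ^ (q + 1) := by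
    intro α
    obtain ⟨M, hM⟩ : ∃ M, m α = M + 1 := ⟨m α - 1, by have := hm α; omega⟩
    rw [hM]
    simp only [Nat.add_sub_cancel]
    rw [Finset.sum_range_succ', add_comm]
    congr 1
    · rw [hℓt0, pow_one, hzt]
    · rw [show Finset.Icc 1 M = Finset.Ico 1 (M + 1) from (Finset.Ico_add_one_right_eq_Icc _ _).symm,
        Finset.sum_Ico_eq_sum_range]
      simp only [show M + 1 - 1 = M from rfl]
      refine Finset.sum_congr rfl fun i hi => ?_
      rw [Finset.mem_range] at hi
      rw [Nat.add_comm 1 i, hℓtp α (i + 1) (by omega) (by rw [hM]; omega), hzt]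
      simp only [hM, Nat.add_sub_cancel]
  simp only [hR]
  rw [mul_sub, Finset.mul_sum]
  rw [Finset.sum_congr rfl fun α (_ : α ∈ Finset.univ) =>
    pera (m α) (hm α) (ℓ α) a b c d (z α) w hc (hfin α) hw1 (hu α)]
  simp only [Finset.sum_add_distrib, Finset.sum_sub_distrib]
  have h2 : (-(linf * ((a : ℂ) * d - b * c) / (c : ℂ) ^ 2)) / (w - (a : ℂ) / c) ^ 2
      = -(((a : ℂ) * d - b * c) / ((c : ℂ) * w - a) ^ 2 * linf) := by
    have hEV : (c : ℂ) * w - a = c * (w - (a : ℂ) / c) := by field_simp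
    rw [hEV]
    generalize w - (a : ℂ) / c = V at hwac ⊢
    field_simp
  have h3 : (-(∑ α, ℓ α 0)) / (w - (a : ℂ) / c) = -∑ α, ℓ α 0 / (w - (a : ℂ) / c) := by
    rw [neg_div, Finset.sum_div]
  rw [h2, h3]
  ring
end

section
/- Let z̃ ∈ ℂ satisfy c·z̃ − a ≠ 0 and z̃ ≠ z̃_α for every α. Then, in V, ((ad−bc)/(c·z̃−a)²) • Σ_{α=1}^{n} Σ_{p=0}^{m_α−1} (f⁻¹(z̃) − z_α)^{−(p+1)} • J^α_p = Σ_{α=1}^{n} Σ_{p=0}^{m_α−1} (z̃ − z̃_α)^{−(p+1)} • J̃^α_p − (c/(c·z̃−a)) • 𝒞, where f⁻¹(z̃) = −(d·z̃−b)/(c·z̃−a) and 𝒞 = Σ_{α=1}^{n} J^α_0. That is, the Gaudin Lax matrix transforms as a 1-form under the change of spectral parameter, up to a term proportional to the constraint 𝒞. -/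
lemma statement5_aux (V : Type*) [AddCommGroup V] [Module ℂ V] (N : ℕ)
    (J Jt : ℕ → V) (D E s c' : ℂ) (hD : D ≠ 0) (hE : E ≠ 0) (hs : s ≠ 0)
    (hJt0 : Jt 0 = J 0)
    (hJtp : ∀ p, 1 ≤ p → p ≤ N →
      Jt p = ∑ k ∈ Finset.Icc p N,
        ((Nat.choose (k - 1) (p - 1) : ℂ) * (-c') ^ (k - p) * ((c' * s - E) * D) ^ p
          / D ^ (p + k)) • J k) :
    ((c' * s - E) * D / E ^ 2) • (∑ p ∈ Finset.range (N + 1), ((-D * s / E) ^ (p + 1))⁻¹ • J p)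
      = (∑ p ∈ Finset.range (N + 1), (s ^ (p + 1))⁻¹ • Jt p) - (c' / E) • J 0 := by
  -- key scalar identity
  have key : ∀ k ∈ Finset.Icc 1 N,
      ((c' * s - E) * D / E ^ 2) * (((-D * s / E) ^ (k + 1))⁻¹)
        = ∑ p ∈ Finset.range k,
            ((Nat.choose (k - 1) (p + 1 - 1) : ℂ) * (-c') ^ (k - (p + 1))
              * ((c' * s - E) * D) ^ (p + 1) / D ^ (p + 1 + k)) * (s ^ (p + 1 + 1))⁻¹ := by
    intro k hk
    simp only [Finset.mem_Icc] at hk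
    obtain ⟨j, rfl⟩ : ∃ j, k = j + 1 := ⟨k - 1, by omega⟩
    have step : ∀ q ∈ Finset.range (j + 1),
        ((Nat.choose (j + 1 - 1) (q + 1 - 1) : ℂ) * (-c') ^ (j + 1 - (q + 1))
              * ((c' * s - E) * D) ^ (q + 1) / D ^ (q + 1 + (j + 1))) * (s ^ (q + 1 + 1))⁻¹
          = ((c' * s - E) * D / (D ^ (j + 2) * s ^ (j + 2)))
              * ((c' * s - E) ^ q * (-(c' * s)) ^ (j - q) * (Nat.choose j q : ℂ)) := by
      intro q hq
      simp only [Finset.mem_range] at hq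
      obtain ⟨r, rfl⟩ : ∃ r, j = q + r := ⟨j - q, by omega⟩
      simp only [Nat.add_sub_cancel, show q + r + 1 - (q + 1) = r from by omega,
        show q + r - q = r from by omega, mul_pow]
      field_simp
      ring
    rw [Finset.sum_congr rfl step, ← Finset.mul_sum, ← add_pow,
      show (c' * s - E) + -(c' * s) = -E from by ring]
    field_simp
    rw [neg_pow, div_pow, mul_pow]
    field_simp
    ring_nf
    rw [Even.neg_one_pow (⟨j, by ring⟩ : Even (j * 2))]
    ring
  have expand : ∀ p ∈ Finset.range N,
      (s ^ (p + 1 + 1))⁻¹ • Jt (p + 1)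
        = ∑ k ∈ Finset.Icc (p + 1) N,
            (((Nat.choose (k - 1) (p + 1 - 1) : ℂ) * (-c') ^ (k - (p + 1))
              * ((c' * s - E) * D) ^ (p + 1) / D ^ (p + 1 + k)) * (s ^ (p + 1 + 1))⁻¹) • J k := by
    intro p hp
    simp only [Finset.mem_range] at hp
    rw [hJtp (p + 1) (by omega) (by omega), Finset.smul_sum]
    exact Finset.sum_congr rfl fun k hk => by rw [smul_smul, mul_comm]
  have shift : ∀ (G : ℕ → V), ∑ p ∈ Finset.range N, G (p + 1) = ∑ k ∈ Finset.Icc 1 N, G k := by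
    intro G
    rw [show Finset.Icc 1 N = Finset.Ico 1 (N + 1) from rfl, Finset.sum_Ico_eq_sum_range]
    simp only [Nat.add_sub_cancel]
    exact Finset.sum_congr rfl fun q _ => by rw [Nat.add_comm]
  rw [Finset.smul_sum, Finset.sum_range_succ' (fun p => ((c' * s - E) * D / E ^ 2) • ((-D * s / E) ^ (p + 1))⁻¹ • J p) N,
    Finset.sum_range_succ' (fun p => (s ^ (p + 1))⁻¹ • Jt p) N, hJt0,
    Finset.sum_congr rfl expand,
    Finset.sum_comm' (t' := Finset.Icc 1 N) (s' := fun k => Finset.range k)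
      (by intro x y; simp only [Finset.mem_range, Finset.mem_Icc]; omega)]
  simp only [smul_smul]
  rw [shift (fun k => (((c' * s - E) * D / E ^ 2) * ((-D * s / E) ^ (k + 1))⁻¹) • J k)]
  have collect : ∀ k ∈ Finset.Icc 1 N,
      (((c' * s - E) * D / E ^ 2) * ((-D * s / E) ^ (k + 1))⁻¹) • J k
        = ∑ p ∈ Finset.range k,
            (((Nat.choose (k - 1) (p + 1 - 1) : ℂ) * (-c') ^ (k - (p + 1))
              * ((c' * s - E) * D) ^ (p + 1) / D ^ (p + 1 + k)) * (s ^ (p + 1 + 1))⁻¹) • J k := by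
    intro k hk
    rw [← Finset.sum_smul, key k hk]
  rw [Finset.sum_congr rfl collect]
  have h0 : ((c' * s - E) * D / E ^ 2) * ((-D * s / E) ^ (0 + 1))⁻¹ = (s ^ (0 + 1))⁻¹ - c' / E := by
    field_simp
    rw [neg_pow, div_pow, mul_pow]
    field_simp
    ring
  rw [h0, sub_smul]
  abel


/-- The Gaudin Lax matrix transforms as a 1-form under the change of spectral parameter
`z̃ = f(z) = (az+b)/(cz+d)`, up to a term proportional to the constraint `𝒞 = ∑_α J^α_0`:
`((ad-bc)/(cz̃-a)²) • Γ(f⁻¹(z̃)) = Γ̃(z̃) - (c/(cz̃-a)) • 𝒞`. -/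
theorem statement5 (V : Type*) [AddCommGroup V] [Module ℂ V]
    (n : ℕ) (z : Fin n → ℂ) (m : Fin n → ℕ) (hm : ∀ α, 1 ≤ m α)
    (J : Fin n → ℕ → V) (a b c d : ℝ)
    (hdet : (a : ℂ) * d - b * c ≠ 0)
    (hfin : ∀ α, (c : ℂ) * z α + d ≠ 0)
    (zt : Fin n → ℂ)
    (hzt : ∀ α, zt α = ((a : ℂ) * z α + b) / ((c : ℂ) * z α + d))
    (Jt : Fin n → ℕ → V)
    (hJt0 : ∀ α, Jt α 0 = J α 0)
    (hJtp : ∀ α p, 1 ≤ p → p ≤ m α - 1 →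
      Jt α p = ∑ k ∈ Finset.Icc p (m α - 1),
        ((Nat.choose (k - 1) (p - 1) : ℂ) * (-(c : ℂ)) ^ (k - p) * ((a : ℂ) * d - b * c) ^ p
          / ((c : ℂ) * z α + d) ^ (p + k)) • J α k)
    (w : ℂ) (hw1 : (c : ℂ) * w - a ≠ 0) (hw2 : ∀ α, w ≠ zt α) :
    (((a : ℂ) * d - b * c) / ((c : ℂ) * w - a) ^ 2) •
        (∑ α, ∑ p ∈ Finset.range (m α),
          ((-(((d : ℂ) * w - b) / ((c : ℂ) * w - a)) - z α) ^ (p + 1))⁻¹ • J α p)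
      = (∑ α, ∑ p ∈ Finset.range (m α), ((w - zt α) ^ (p + 1))⁻¹ • Jt α p)
        - ((c : ℂ) / ((c : ℂ) * w - a)) • (∑ α, J α 0) := by
  rw [Finset.smul_sum, Finset.smul_sum, ← Finset.sum_sub_distrib]
  refine Finset.sum_congr rfl fun α _ => ?_
  obtain ⟨N, hN⟩ : ∃ N, m α = N + 1 := ⟨m α - 1, by have := hm α; omega⟩
  have hD : (c : ℂ) * z α + d ≠ 0 := hfin α
  have hs : w - zt α ≠ 0 := sub_ne_zero.mpr (hw2 α)
  have hDelta : (a : ℂ) * d - b * c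
      = ((c : ℂ) * (w - zt α) - ((c : ℂ) * w - a)) * ((c : ℂ) * z α + d) := by
    rw [hzt α]; field_simp; ring
  have hu : -(((d : ℂ) * w - b) / ((c : ℂ) * w - a)) - z α
      = -((c : ℂ) * z α + d) * (w - zt α) / ((c : ℂ) * w - a) := by
    have hw1' : w * (c : ℂ) - a ≠ 0 := by rwa [mul_comm]
    have hD' : (d : ℂ) + z α * c ≠ 0 := by rwa [mul_comm, add_comm]
    rw [hzt α]; field_simp; ring
  rw [hN, hDelta, hu]
  refine statement5_aux V N (J α) (Jt α) ((c : ℂ) * z α + d) ((c : ℂ) * w - a)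
    (w - zt α) c hD hw1 hs (hJt0 α) fun p h1 h2 => ?_
  rw [hJtp α p h1 (by omega), show m α - 1 = N from by omega, ← hDelta]
end

section
/- For every z ∈ ℂ with z ≠ z_r for all r ∈ {1,…,N}, one has −ℓ^∞·φ_+(z)·φ_−(z) = Σ_{r=1}^{N} ( ℓ^r/(z−z_r)² − 2κ^r/(z−z_r) ) − ℓ^∞, where ℓ^r = −ℓ^∞·φ^r_+(z_r)·φ^r_−(z_r) and κ^r = (ℓ^∞/2)·( φ^r_+(z_r)·(φ^r_−)'(z_r) + (φ^r_+)'(z_r)·φ^r_−(z_r) ). That is, the partial fraction decomposition of the factorised twist function φ = −ℓ^∞ φ_+ φ_− has double-pole coefficients ℓ^r, residues −2κ^r at each z_r, and constant term −ℓ^∞. -/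
/-- The factorised twist function `φ_±(w) = ∏_i (w - ζ^±_i) / ∏_r (w - z_r)`. -/
noncomputable def phiFull (N : ℕ) (z ζ : Fin N → ℂ) (w : ℂ) : ℂ :=
  (∏ i, (w - ζ i)) / ∏ r, (w - z r)

/-- The function `φ^r_±(w) = (w - z_r) φ_±(w)`, with the pole at `z_r` removed so that it
is defined (and differentiable) at `w = z_r`. -/
noncomputable def phiReg (N : ℕ) (z ζ : Fin N → ℂ) (r : Fin N) (w : ℂ) : ℂ :=
  (∏ i, (w - ζ i)) / ∏ s ∈ Finset.univ.erase r, (w - z s)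

open Finset Polynomial

lemma auxLag {N : ℕ} (z : Fin N → ℂ) (hz : Function.Injective z) (ζ : Fin N → ℂ) (w : ℂ) :
    (∏ i, (w - ζ i)) = (∏ r, (w - z r)) +
      ∑ r, ((∏ i, (z r - ζ i)) / ∏ s ∈ univ.erase r, (z r - z s))
        * ∏ s ∈ univ.erase r, (w - z s) := by
  classical
  set P : Polynomial ℂ := ∏ i, (X - C (ζ i)) with hP
  set Q : Polynomial ℂ := ∏ r, (X - C (z r)) with hQ
  have hPm : P.Monic := monic_prod_of_monic _ _ fun i _ => monic_X_sub_C _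
  have hQm : Q.Monic := monic_prod_of_monic _ _ fun i _ => monic_X_sub_C _
  have hPdeg : P.degree = N := by rw [hP, degree_prod]; simp
  have hQdeg : Q.degree = N := by rw [hQ, degree_prod]; simp
  have hdeg : (P - Q).degree < (univ : Finset (Fin N)).card := by
    rw [Finset.card_univ, Fintype.card_fin]
    by_cases h : P = Q
    · rw [h, sub_self, degree_zero, Nat.cast_withBot]
      exact WithBot.bot_lt_coe N
    · calc (P - Q).degree < P.degree :=
            degree_sub_lt (hPdeg.trans hQdeg.symm) hPm.ne_zero
              (by rw [hPm.leadingCoeff, hQm.leadingCoeff])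
        _ = N := hPdeg
  have key := congrArg (Polynomial.eval w)
    (Lagrange.eq_interpolate (s := (univ : Finset (Fin N))) (v := z) (f := P - Q)
      (hz.injOn) hdeg)
  have hPw : P.eval w = ∏ i, (w - ζ i) := by simp [hP, eval_prod]
  have hQw : Q.eval w = ∏ r, (w - z r) := by simp [hQ, eval_prod]
  have hQz : ∀ r, Q.eval (z r) = 0 := by
    intro r
    rw [hQ, eval_prod]
    exact Finset.prod_eq_zero (Finset.mem_univ r) (by simp)
  rw [eval_sub, hPw, hQw] at key
  rw [eq_comm, add_comm, ← eq_sub_iff_add_eq, key, Lagrange.interpolate_apply, eval_finset_sum]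
  refine Finset.sum_congr rfl fun r _ => ?_
  rw [eval_mul, eval_C, eval_sub, hQz r, sub_zero, hP, eval_prod]
  simp only [eval_sub, eval_X, eval_C]
  rw [Lagrange.basis, eval_prod]
  have : ∀ j ∈ univ.erase r, eval w (Lagrange.basisDivisor (z r) (z j))
      = (z r - z j)⁻¹ * (w - z j) := by
    intro j _
    simp [Lagrange.basisDivisor]
  rw [Finset.prod_congr rfl this, Finset.prod_mul_distrib, Finset.prod_inv_distrib,
    div_eq_mul_inv]
  ring

lemma auxDecomp {N : ℕ} (z : Fin N → ℂ) (hz : Function.Injective z) (ζ : Fin N → ℂ)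
    (u : ℂ) (hu : ∀ r, u ≠ z r) :
    phiFull N z ζ u = 1 + ∑ r, phiReg N z ζ r (z r) / (u - z r) := by
  classical
  have hQr : ∀ r : Fin N, (∏ s ∈ univ.erase r, (u - z s)) ≠ 0 :=
    fun r => Finset.prod_ne_zero_iff.mpr fun s _ => sub_ne_zero.mpr (hu s)
  have hQ : (∏ r, (u - z r)) ≠ 0 :=
    Finset.prod_ne_zero_iff.mpr fun s _ => sub_ne_zero.mpr (hu s)
  rw [phiFull, auxLag z hz ζ u, add_div, div_self hQ]
  congr 1
  rw [Finset.sum_div]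
  refine Finset.sum_congr rfl fun r _ => ?_
  rw [phiReg, ← Finset.mul_prod_erase _ (fun s => u - z s) (Finset.mem_univ r),
    mul_div_mul_right _ _ (hQr r)]

lemma auxRegEq {N : ℕ} (z : Fin N → ℂ) (hz : Function.Injective z) (ζ : Fin N → ℂ)
    (r : Fin N) (w : ℂ) (hw : ∀ s ∈ Finset.univ.erase r, w ≠ z s) :
    phiReg N z ζ r w = (w - z r) + (phiReg N z ζ r (z r)
      + ∑ s ∈ Finset.univ.erase r, phiReg N z ζ s (z s) * ((w - z r) / (w - z s))) := by
  classical
  have hQr : (∏ s ∈ univ.erase r, (w - z s)) ≠ 0 :=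
    Finset.prod_ne_zero_iff.mpr fun s hs => sub_ne_zero.mpr (hw s hs)
  rw [phiReg, auxLag z hz ζ w, add_div, Finset.sum_div]
  congr 1
  · rw [← Finset.mul_prod_erase _ (fun s => w - z s) (Finset.mem_univ r), mul_div_assoc,
      div_self hQr, mul_one]
  · rw [← Finset.add_sum_erase _ _ (Finset.mem_univ r)]
    congr 1
    · rw [phiReg, mul_div_assoc, div_self hQr, mul_one]
    · refine Finset.sum_congr rfl fun t ht => ?_
      have hwt : w - z t ≠ 0 := sub_ne_zero.mpr (hw t ht)
      have hQQ : (∏ s ∈ univ.erase t, (w - z s)) * (w - z t)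
          = (∏ s ∈ univ.erase r, (w - z s)) * (w - z r) := by
        rw [Finset.prod_erase_mul _ _ (Finset.mem_univ t),
          Finset.prod_erase_mul _ _ (Finset.mem_univ r)]
      rw [phiReg, mul_div_assoc]
      congr 1
      rw [div_eq_div_iff hQr hwt]
      linear_combination hQQ

lemma auxDeriv {N : ℕ} (z : Fin N → ℂ) (hz : Function.Injective z) (ζ : Fin N → ℂ)
    (r : Fin N) :
    deriv (phiReg N z ζ r) (z r)
      = 1 + ∑ s ∈ Finset.univ.erase r, phiReg N z ζ s (z s) / (z r - z s) := by
  classical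
  set U : Set ℂ := ⋂ s ∈ Finset.univ.erase r, ({z s}ᶜ : Set ℂ) with hU
  have hUopen : IsOpen U := isOpen_biInter_finset fun s _ => isOpen_compl_singleton
  have hmem : z r ∈ U := by
    simp only [hU, Set.mem_iInter, Set.mem_compl_iff, Set.mem_singleton_iff]
    intro s hs h
    exact (Finset.mem_erase.mp hs).1 (hz h.symm)
  have hev : phiReg N z ζ r =ᶠ[nhds (z r)] fun w => (w - z r) + (phiReg N z ζ r (z r)
      + ∑ s ∈ Finset.univ.erase r, phiReg N z ζ s (z s) * ((w - z r) / (w - z s))) := by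
    filter_upwards [hUopen.mem_nhds hmem] with w hw
    refine auxRegEq z hz ζ r w fun s hs => ?_
    simp only [hU, Set.mem_iInter, Set.mem_compl_iff, Set.mem_singleton_iff] at hw
    exact hw s hs
  rw [hev.deriv_eq]
  have h1 : HasDerivAt (fun w : ℂ => w - z r) 1 (z r) := (hasDerivAt_id _).sub_const _
  have hds : ∀ s ∈ Finset.univ.erase r,
      HasDerivAt (fun w => phiReg N z ζ s (z s) * ((w - z r) / (w - z s)))
        (phiReg N z ζ s (z s) / (z r - z s)) (z r) := by
    intro s hs
    have hne : z r - z s ≠ 0 :=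
      sub_ne_zero.mpr fun h => (Finset.mem_erase.mp hs).1 (hz h).symm
    have h2 : HasDerivAt (fun w : ℂ => w - z s) 1 (z r) := (hasDerivAt_id _).sub_const _
    have h3 := h1.div h2 hne
    have h4 : (1 * (z r - z s) - (z r - z r) * 1) / (z r - z s) ^ 2 = 1 / (z r - z s) := by
      rw [sub_self, zero_mul, sub_zero, one_mul, sq, div_mul_cancel_left₀ hne, one_div]
    rw [h4] at h3
    have h5 := h3.const_mul (phiReg N z ζ s (z s))
    have h6 : phiReg N z ζ s (z s) * (1 / (z r - z s))
        = phiReg N z ζ s (z s) / (z r - z s) := by ring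
    rwa [h6] at h5
  have hsum := HasDerivAt.fun_sum hds
  have hmain := h1.fun_add ((hasDerivAt_const (z r) (phiReg N z ζ r (z r))).fun_add hsum)
  rw [hmain.deriv, zero_add]

lemma auxProdSum {N : ℕ} (a b e : Fin N → ℂ) (d : Fin N → Fin N → ℂ)
    (hd : ∀ r s : Fin N, s ≠ r → e r * e s = (e r - e s) * d r s)
    (hanti : ∀ r s : Fin N, d s r = -d r s) :
    (∑ r, a r * e r) * (∑ r, b r * e r)
      = (∑ r, a r * b r * e r ^ 2)
        + ∑ r, (∑ s ∈ Finset.univ.erase r, (a r * b s + a s * b r) * d r s) * e r := by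
  classical
  rw [Finset.sum_mul_sum]
  have h1 : ∀ r ∈ (univ : Finset (Fin N)), ∑ s, a r * e r * (b s * e s)
      = a r * b r * e r ^ 2 + ∑ s ∈ Finset.univ.erase r, a r * b s * (e r * e s) := by
    intro r _
    rw [← Finset.add_sum_erase _ (fun s => a r * e r * (b s * e s)) (Finset.mem_univ r)]
    exact congrArg₂ (· + ·) (by ring) (Finset.sum_congr rfl fun s _ => by ring)
  rw [Finset.sum_congr rfl h1, Finset.sum_add_distrib]
  congr 1
  have h2 : ∑ r, ∑ s ∈ Finset.univ.erase r, a r * b s * (e r * e s)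
      = (∑ r, ∑ s ∈ Finset.univ.erase r, a r * b s * d r s * e r)
        - ∑ r, ∑ s ∈ Finset.univ.erase r, a r * b s * d r s * e s := by
    rw [← Finset.sum_sub_distrib]
    refine Finset.sum_congr rfl fun r _ => ?_
    rw [← Finset.sum_sub_distrib]
    refine Finset.sum_congr rfl fun s hs => ?_
    rw [hd r s (Finset.mem_erase.mp hs).1]
    ring
  have h3 : ∑ r, ∑ s ∈ Finset.univ.erase r, a r * b s * d r s * e s
      = ∑ r, ∑ s ∈ Finset.univ.erase r, a s * b r * d s r * e r :=
    Finset.sum_comm' fun x y => by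
      simp only [Finset.mem_univ, Finset.mem_erase, true_and, and_true]
      exact ne_comm
  have h4 : ∑ r, ∑ s ∈ Finset.univ.erase r, a s * b r * d s r * e r
      = ∑ r, ∑ s ∈ Finset.univ.erase r, -(a s * b r * d r s * e r) := by
    refine Finset.sum_congr rfl fun r _ => Finset.sum_congr rfl fun s _ => ?_
    rw [hanti r s]
    ring
  rw [h2, h3, h4, ← Finset.sum_sub_distrib]
  refine Finset.sum_congr rfl fun r _ => ?_
  rw [← Finset.sum_sub_distrib, Finset.sum_mul]
  refine Finset.sum_congr rfl fun s _ => ?_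
  ring

/-- Partial fraction decomposition of the factorised twist function
`φ = -ℓ^∞ φ_+ φ_-`: it has double-pole coefficients `ℓ^r = -ℓ^∞ φ^r_+(z_r) φ^r_-(z_r)`,
residues `-2κ^r` at each `z_r` with
`κ^r = (ℓ^∞/2)(φ^r_+(z_r) (φ^r_-)'(z_r) + (φ^r_+)'(z_r) φ^r_-(z_r))`,
and constant term `-ℓ^∞`. -/
theorem statement6 (N : ℕ) (hN : 1 ≤ N) (z : Fin N → ℂ) (hz : Function.Injective z)
    (ζp ζm : Fin N → ℂ) (hζp : ∀ i r, ζp i ≠ z r) (hζm : ∀ i r, ζm i ≠ z r)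
    (linf : ℂ)
    (ℓ : Fin N → ℂ)
    (hℓ : ∀ r, ℓ r = -linf * phiReg N z ζp r (z r) * phiReg N z ζm r (z r))
    (κ : Fin N → ℂ)
    (hκ : ∀ r, κ r = linf / 2 *
      (phiReg N z ζp r (z r) * deriv (phiReg N z ζm r) (z r)
        + deriv (phiReg N z ζp r) (z r) * phiReg N z ζm r (z r)))
    (u : ℂ) (hu : ∀ r, u ≠ z r) :
    -linf * phiFull N z ζp u * phiFull N z ζm u
      = (∑ r, (ℓ r / (u - z r) ^ 2 - 2 * κ r / (u - z r))) - linf := by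
  classical
  have he : ∀ r, u - z r ≠ 0 := fun r => sub_ne_zero.mpr (hu r)
  have hzd : ∀ r s : Fin N, s ≠ r → z r - z s ≠ 0 :=
    fun r s h => sub_ne_zero.mpr fun hh => h (hz hh).symm
  rw [auxDecomp z hz ζp u hu, auxDecomp z hz ζm u hu]
  have hsum : ∀ r ∈ (univ : Finset (Fin N)), ℓ r / (u - z r) ^ 2 - 2 * κ r / (u - z r)
      = -linf * (phiReg N z ζp r (z r) * phiReg N z ζm r (z r)) * ((u - z r)⁻¹) ^ 2
        - linf * (phiReg N z ζp r (z r) + phiReg N z ζm r (z r)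
            + ∑ s ∈ Finset.univ.erase r,
                (phiReg N z ζp r (z r) * phiReg N z ζm s (z s)
                  + phiReg N z ζp s (z s) * phiReg N z ζm r (z r)) * (z r - z s)⁻¹)
          * (u - z r)⁻¹ := by
    intro r _
    rw [hℓ r, hκ r, auxDeriv z hz ζm r, auxDeriv z hz ζp r]
    have hq : phiReg N z ζp r (z r)
          * (1 + ∑ s ∈ Finset.univ.erase r, phiReg N z ζm s (z s) / (z r - z s))
        + (1 + ∑ s ∈ Finset.univ.erase r, phiReg N z ζp s (z s) / (z r - z s))
          * phiReg N z ζm r (z r)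
        = phiReg N z ζp r (z r) + phiReg N z ζm r (z r)
          + ∑ s ∈ Finset.univ.erase r,
              (phiReg N z ζp r (z r) * phiReg N z ζm s (z s)
                + phiReg N z ζp s (z s) * phiReg N z ζm r (z r)) * (z r - z s)⁻¹ := by
      rw [mul_add, mul_one, add_mul, one_mul, Finset.mul_sum, Finset.sum_mul,
        add_add_add_comm, ← Finset.sum_add_distrib]
      have hterm : ∀ s ∈ Finset.univ.erase r,
          phiReg N z ζp r (z r) * (phiReg N z ζm s (z s) / (z r - z s))
            + phiReg N z ζp s (z s) / (z r - z s) * phiReg N z ζm r (z r)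
          = (phiReg N z ζp r (z r) * phiReg N z ζm s (z s)
              + phiReg N z ζp s (z s) * phiReg N z ζm r (z r)) * (z r - z s)⁻¹ :=
        fun s _ => by ring
      rw [Finset.sum_congr rfl hterm]
    have hpow : ((u - z r) ^ 2)⁻¹ = (u - z r)⁻¹ ^ 2 := by rw [inv_pow]
    linear_combination (-linf * (u - z r)⁻¹) * hq
      + (-linf * phiReg N z ζp r (z r) * phiReg N z ζm r (z r)) * hpow
  rw [Finset.sum_congr rfl hsum, Finset.sum_sub_distrib]
  simp only [div_eq_mul_inv]
  have hd : ∀ r s : Fin N, s ≠ r →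
      (u - z r)⁻¹ * (u - z s)⁻¹ = ((u - z r)⁻¹ - (u - z s)⁻¹) * (z r - z s)⁻¹ := by
    intro r s hs
    have h1 := he r
    have h2 := he s
    have h3 := hzd r s hs
    field_simp
    ring
  have hanti : ∀ r s : Fin N, (z s - z r)⁻¹ = -(z r - z s)⁻¹ := by
    intro r s
    rw [← neg_sub, inv_neg]
  have hAB := auxProdSum (fun r => phiReg N z ζp r (z r)) (fun r => phiReg N z ζm r (z r))
    (fun r => (u - z r)⁻¹) (fun r s => (z r - z s)⁻¹) hd hanti
  have h1 : ∑ r, -linf * (phiReg N z ζp r (z r) * phiReg N z ζm r (z r)) * ((u - z r)⁻¹) ^ 2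
      = -linf * ∑ r, phiReg N z ζp r (z r) * phiReg N z ζm r (z r) * ((u - z r)⁻¹) ^ 2 := by
    rw [Finset.mul_sum]
    exact Finset.sum_congr rfl fun r _ => by ring
  have h2 : ∑ r, linf * (phiReg N z ζp r (z r) + phiReg N z ζm r (z r)
        + ∑ s ∈ Finset.univ.erase r,
            (phiReg N z ζp r (z r) * phiReg N z ζm s (z s)
              + phiReg N z ζp s (z s) * phiReg N z ζm r (z r)) * (z r - z s)⁻¹)
        * (u - z r)⁻¹
      = linf * ((∑ r, phiReg N z ζp r (z r) * (u - z r)⁻¹)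
          + (∑ r, phiReg N z ζm r (z r) * (u - z r)⁻¹)
          + ∑ r, (∑ s ∈ Finset.univ.erase r,
              (phiReg N z ζp r (z r) * phiReg N z ζm s (z s)
                + phiReg N z ζp s (z s) * phiReg N z ζm r (z r)) * (z r - z s)⁻¹)
            * (u - z r)⁻¹) := by
    rw [← Finset.sum_add_distrib, ← Finset.sum_add_distrib, Finset.mul_sum]
    exact Finset.sum_congr rfl fun r _ => by ring
  linear_combination (-1 : ℂ) * h1 + h2 + (-linf) * hAB
end

section
/- For every z ∈ ℂ with z ≠ w_r for all r ∈ {1,…,M}, one has −λ·ψ_+(z)·ψ_−(z) = Σ_{r=1}^{M} ( ℓ̃_r/(z−w_r)² − 2κ_r/(z−w_r) ), where ℓ̃_r = −λ·ψ^r_+(w_r)·ψ^r_−(w_r). That is, the partial fraction decomposition of the factorised twist function of the gauged model, whose 1-form is regular at infinity, has double-pole coefficients ℓ̃_r and residues −2κ_r at each w_r and no constant term. -/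
open Polynomial

lemma sq_X_sub_C_dvd (p : ℂ[X]) (a : ℂ)
    (h0 : p.eval a = 0) (h1 : p.derivative.eval a = 0) :
    (X - C a) ^ 2 ∣ p := by
  obtain ⟨q, hq⟩ := (dvd_iff_isRoot (p := p) (a := a)).mpr h0
  have hqa : q.eval a = 0 := by
    have h := congrArg (fun r : ℂ[X] => r.derivative.eval a) hq
    simp only [derivative_mul, derivative_sub, derivative_X, derivative_C, sub_zero, one_mul,
      eval_add, eval_mul, eval_sub, eval_X, eval_C, sub_self, zero_mul, add_zero] at h
    rw [h1] at h; exact h.symm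
  obtain ⟨q', hq'⟩ := (dvd_iff_isRoot (p := q) (a := a)).mpr hqa
  exact ⟨q', by rw [hq, hq', sq]; ring⟩

/-- The factorised gauged twist function `ψ_±(v) = ∏_{i<M-1} (v - η^±_i) / ∏_{r<M} (v - w_r)`. -/
noncomputable def psiFull (M : ℕ) (w : Fin M → ℂ) (η : Fin (M - 1) → ℂ) (v : ℂ) : ℂ :=
  (∏ i, (v - η i)) / ∏ r, (v - w r)

/-- The function `ψ^r_±(v) = (v - w_r) ψ_±(v)`, with the pole at `w_r` removed so that it
is defined (and differentiable) at `v = w_r`. -/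
noncomputable def psiReg (M : ℕ) (w : Fin M → ℂ) (η : Fin (M - 1) → ℂ) (r : Fin M)
    (v : ℂ) : ℂ :=
  (∏ i, (v - η i)) / ∏ s ∈ Finset.univ.erase r, (v - w s)

/-- Partial fraction decomposition of the factorised twist function `-λ ψ_+ ψ_-` of the
gauged model, whose 1-form is regular at infinity: it has double-pole coefficients
`ℓ̃_r = -λ ψ^r_+(w_r) ψ^r_-(w_r)` and residues `-2κ_r` at each `w_r`, and no constant term. -/
theorem statement7 (M : ℕ) (hM : 1 ≤ M) (w : Fin M → ℂ) (hw : Function.Injective w)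
    (ηp ηm : Fin (M - 1) → ℂ) (hηp : ∀ i r, ηp i ≠ w r) (hηm : ∀ i r, ηm i ≠ w r)
    (lam : ℂ)
    (ℓt : Fin M → ℂ)
    (hℓt : ∀ r, ℓt r = -lam * psiReg M w ηp r (w r) * psiReg M w ηm r (w r))
    (κ : Fin M → ℂ)
    (hκ : ∀ r, κ r = lam / 2 *
      (psiReg M w ηp r (w r) * deriv (psiReg M w ηm r) (w r)
        + deriv (psiReg M w ηp r) (w r) * psiReg M w ηm r (w r)))
    (u : ℂ) (hu : ∀ r, u ≠ w r) :
    -lam * psiFull M w ηp u * psiFull M w ηm u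
      = ∑ r, (ℓt r / (u - w r) ^ 2 - 2 * κ r / (u - w r)) := by
  classical
  set Np : ℂ[X] := ∏ i, (X - C (ηp i)) with hNp
  set Nm : ℂ[X] := ∏ i, (X - C (ηm i)) with hNm
  set D : ℂ[X] := ∏ r, (X - C (w r)) with hD
  set E : Fin M → ℂ[X] := fun r => ∏ s ∈ Finset.univ.erase r, (X - C (w s)) with hE
  have evalNp : ∀ v : ℂ, Np.eval v = ∏ i, (v - ηp i) := by
    intro v; simp [hNp, eval_prod]
  have evalNm : ∀ v : ℂ, Nm.eval v = ∏ i, (v - ηm i) := by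
    intro v; simp [hNm, eval_prod]
  have evalD : ∀ v : ℂ, D.eval v = ∏ r, (v - w r) := by
    intro v; simp [hD, eval_prod]
  have evalE : ∀ (r : Fin M) (v : ℂ), (E r).eval v = ∏ s ∈ Finset.univ.erase r, (v - w s) := by
    intro r v; simp [hE, eval_prod]
  have hEne : ∀ r : Fin M, (E r).eval (w r) ≠ 0 := by
    intro r
    rw [evalE]
    refine Finset.prod_ne_zero_iff.mpr fun s hs => sub_ne_zero_of_ne ?_
    intro h
    exact (Finset.mem_erase.mp hs).1 (hw h).symm
  have hE0 : ∀ r t : Fin M, r ≠ t → (E r).eval (w t) = 0 := by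
    intro r t hrt
    rw [evalE]
    exact Finset.prod_eq_zero (Finset.mem_erase.mpr ⟨Ne.symm hrt, Finset.mem_univ t⟩) (by simp)
  have hpsiReg : ∀ (η : Fin (M - 1) → ℂ) (r : Fin M),
      psiReg M w η r = fun v => (∏ i, (X - C (η i)) : ℂ[X]).eval v / (E r).eval v := by
    intro η r; funext v; simp [psiReg, hE, eval_prod]
  have hderiv : ∀ (η : Fin (M - 1) → ℂ) (r : Fin M),
      deriv (psiReg M w η r) (w r) =
        ((∏ i, (X - C (η i)) : ℂ[X]).derivative.eval (w r) * (E r).eval (w r)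
          - (∏ i, (X - C (η i)) : ℂ[X]).eval (w r) * (E r).derivative.eval (w r))
        / ((E r).eval (w r)) ^ 2 := by
    intro η r
    rw [hpsiReg]
    exact (((∏ i, (X - C (η i)) : ℂ[X]).hasDerivAt (w r)).div ((E r).hasDerivAt (w r))
      (hEne r)).deriv
  set P : ℂ[X] := C (-lam) * (Np * Nm) with hP
  set Q : ℂ[X] := ∑ r, (C (ℓt r) - C (2 * κ r) * (X - C (w r))) * (E r) ^ 2 with hQ
  have hDfac : ∀ r : Fin M, D = (X - C (w r)) * E r := by
    intro r
    rw [hD, hE, ← Finset.mul_prod_erase Finset.univ _ (Finset.mem_univ r)]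
  -- cleared-denominator forms of ℓt and κ
  have h3 : ∀ t : Fin M, ℓt t * ((E t).eval (w t)) ^ 2
      = -lam * (Np.eval (w t) * Nm.eval (w t)) := by
    intro t
    have he := hEne t
    rw [hℓt t]
    simp only [hpsiReg ηp t, hpsiReg ηm t]
    field_simp
    ring
  have h2 : ∀ t : Fin M, κ t * ((E t).eval (w t)) ^ 3
      = lam / 2 * (Np.eval (w t) *
          (Nm.derivative.eval (w t) * (E t).eval (w t)
            - Nm.eval (w t) * (E t).derivative.eval (w t))
        + (Np.derivative.eval (w t) * (E t).eval (w t)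
            - Np.eval (w t) * (E t).derivative.eval (w t)) * Nm.eval (w t)) := by
    intro t
    have he := hEne t
    have he3 : ((E t).eval (w t)) ^ 3 ≠ 0 := pow_ne_zero 3 he
    rw [hκ t, hderiv ηp t, hderiv ηm t]
    simp only [hpsiReg ηp t, hpsiReg ηm t]
    rw [div_mul_div_comm, div_mul_div_comm, ← pow_succ', ← pow_succ, ← add_div,
      mul_assoc, show (2 + 1) = 3 from rfl, div_mul_cancel₀ _ he3]
  have key : P = Q := by
    have hQe : ∀ t : Fin M, Q.eval (w t) = ℓt t * ((E t).eval (w t)) ^ 2 := by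
      intro t
      rw [hQ, eval_finset_sum]
      rw [Finset.sum_eq_single t]
      · simp
      · intro r _ hrt
        simp [hE0 r t hrt]
      · simp
    have hPe : ∀ t : Fin M, P.eval (w t) = -lam * (Np.eval (w t) * Nm.eval (w t)) := by
      intro t; simp [hP]
    have hR0 : ∀ t : Fin M, (P - Q).eval (w t) = 0 := by
      intro t
      rw [eval_sub, hQe t, hPe t]
      linear_combination -(h3 t)
    have hR1 : ∀ t : Fin M, (P - Q).derivative.eval (w t) = 0 := by
      intro t
      have he := hEne t
      have hQd : Q.derivative.eval (w t)
          = -(2 * κ t) * ((E t).eval (w t)) ^ 2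
            + ℓt t * (2 * (E t).eval (w t) * (E t).derivative.eval (w t)) := by
        rw [hQ, derivative_sum, eval_finset_sum]
        rw [Finset.sum_eq_single t]
        · simp only [derivative_mul, derivative_pow, derivative_sub, derivative_X,
            derivative_C, eval_add, eval_mul, eval_sub, eval_pow, eval_X, eval_C,
            sub_self, mul_zero, zero_mul, sub_zero, zero_sub, Nat.cast_ofNat, eval_neg, eval_zero, eval_one]
          ring
        · intro r _ hrt
          simp [derivative_mul, derivative_pow, hE0 r t hrt]
        · simp
      have hPd : P.derivative.eval (w t)
          = -lam * (Np.derivative.eval (w t) * Nm.eval (w t)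
              + Np.eval (w t) * Nm.derivative.eval (w t)) := by
        simp only [hP, derivative_mul, derivative_C, zero_mul, zero_add, eval_add,
          eval_mul, eval_C]
        try ring
      have hG : (P.derivative.eval (w t) - Q.derivative.eval (w t))
          * ((E t).eval (w t)) ^ 3 = 0 := by
        rw [hPd, hQd]
        linear_combination 2 * ((E t).eval (w t)) ^ 2 * h2 t
          - 2 * ((E t).eval (w t)) ^ 2 * (E t).derivative.eval (w t) * h3 t
      rw [derivative_sub, eval_sub]
      exact (mul_eq_zero.mp hG).resolve_right (pow_ne_zero 3 he)
    have hdvd : D ^ 2 ∣ P - Q := by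
      have hsq : D ^ 2 = ∏ r, (X - C (w r)) ^ 2 := by rw [hD, ← Finset.prod_pow]
      rw [hsq]
      refine Finset.prod_dvd_of_coprime (fun r _ s hs hrs => ?_) (fun t _ => ?_)
      · exact (pairwise_coprime_X_sub_C hw hrs).pow
      · exact sq_X_sub_C_dvd _ _ (hR0 t) (hR1 t)
    have hdegD : (D ^ 2).natDegree = 2 * M := by
      rw [natDegree_pow, hD, natDegree_prod _ _ (fun r _ => X_sub_C_ne_zero (w r))]
      simp [natDegree_X_sub_C]
      try ring
    have hdegR : (P - Q).natDegree < 2 * M := by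
      have hNpd : Np.natDegree ≤ M - 1 := by
        refine (natDegree_prod_le _ _).trans ?_
        simp [natDegree_X_sub_C]
      have hNmd : Nm.natDegree ≤ M - 1 := by
        refine (natDegree_prod_le _ _).trans ?_
        simp [natDegree_X_sub_C]
      have hPdeg : P.natDegree ≤ 2 * M - 2 := by
        refine (natDegree_mul_le).trans ?_
        have := natDegree_mul_le (p := Np) (q := Nm)
        simp only [natDegree_C]
        omega
      have hQdeg : Q.natDegree ≤ 2 * M - 1 := by
        refine natDegree_sum_le_of_forall_le _ _ fun r _ => ?_
        refine (natDegree_mul_le).trans ?_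
        have h1 : (C (ℓt r) - C (2 * κ r) * (X - C (w r))).natDegree ≤ 1 := by
          refine (natDegree_sub_le _ _).trans ?_
          have := natDegree_mul_le (p := (C (2 * κ r) : ℂ[X])) (q := X - C (w r))
          simp only [natDegree_C, natDegree_X_sub_C] at this ⊢
          omega
        have h2' : ((E r) ^ 2).natDegree ≤ 2 * (M - 1) := by
          rw [natDegree_pow]
          have hEd : (E r).natDegree ≤ M - 1 := by
            refine (natDegree_prod_le _ _).trans ?_
            simp only [natDegree_X_sub_C, Finset.sum_const, smul_eq_mul, mul_one]
            rw [Finset.card_erase_of_mem (Finset.mem_univ r)]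
            simp
          omega
        omega
      have := natDegree_sub_le P Q
      omega
    have hzero : P - Q = 0 := eq_zero_of_dvd_of_natDegree_lt hdvd (by omega)
    exact sub_eq_zero.mp hzero
  -- evaluate at u
  have hDu : ∀ r : Fin M, u - w r ≠ 0 := fun r => sub_ne_zero_of_ne (hu r)
  have hDune : D.eval u ≠ 0 := by
    rw [evalD]; exact Finset.prod_ne_zero_iff.mpr fun r _ => hDu r
  have hEu : ∀ r : Fin M, (E r).eval u ≠ 0 := by
    intro r; rw [evalE]
    exact Finset.prod_ne_zero_iff.mpr fun s _ => hDu s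
  have hfac : ∀ r : Fin M, D.eval u = (u - w r) * (E r).eval u := by
    intro r; rw [hDfac r]; simp
  have lhs_eq : -lam * psiFull M w ηp u * psiFull M w ηm u = P.eval u / (D.eval u) ^ 2 := by
    simp only [psiFull, hP, eval_mul, eval_C, ← evalNp, ← evalNm, ← evalD]
    field_simp
  rw [lhs_eq, key, hQ, eval_finset_sum, Finset.sum_div]
  refine Finset.sum_congr rfl fun r _ => ?_
  rw [hfac r]
  simp only [eval_mul, eval_sub, eval_pow, eval_C, eval_X]
  have h1 := hDu r
  have h2 := hEu r
  field_simp
end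

section
/- For every z ∈ ℂ with c·z + d ≠ 0 and z ≠ z_r for all r ∈ {1,…,N}: (i) for each sign ±, φ̃_±(f(z)) = ( ω_± / (f(z) − a/c) ) · φ_±(z); and (ii) for each sign ± and each r ∈ {1,…,N}, φ̃^r_±(f(z)) = ( ω_± · c · (c·z̃_r − a) / (ad−bc) ) · φ^r_±(z), where φ̃^r_±(z̃) = (z̃ − z̃_r)·φ̃_±(z̃). -/
/-- The factorised gauged twist function
`φ̃_±(z̃) = ∏_{i≤N} (z̃ - ζ̃^±_i) / ∏_{r≤N+1} (z̃ - z̃_r)`. -/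
noncomputable def phiTFull (N : ℕ) (zt : Fin (N + 1) → ℂ) (ζt : Fin N → ℂ) (w : ℂ) : ℂ :=
  (∏ i, (w - ζt i)) / ∏ r, (w - zt r)


lemma auxA (N : ℕ) (z ζ : Fin N → ℂ)
    (a b c d : ℝ) (hdet : (a : ℂ) * d - b * c ≠ 0) (hc : (c : ℂ) ≠ 0)
    (hzfin : ∀ r, (c : ℂ) * z r + d ≠ 0)
    (hζfin : ∀ i, (c : ℂ) * ζ i + d ≠ 0)
    (f : ℂ → ℂ) (hf : ∀ v, f v = ((a : ℂ) * v + b) / ((c : ℂ) * v + d))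
    (zt : Fin (N + 1) → ℂ) (hzt : ∀ r : Fin N, zt r.castSucc = f (z r))
    (hztlast : zt (Fin.last N) = (a : ℂ) / c)
    (ω : ℂ) (hω : ω = (∏ r, ((c : ℂ) * z r + d)) / ∏ i, ((c : ℂ) * ζ i + d))
    (u : ℂ) (hu1 : (c : ℂ) * u + d ≠ 0) (hu2 : ∀ r, u ≠ z r) :
    phiTFull N zt (fun i => f (ζ i)) (f u)
        = ω / (f u - (a : ℂ) / c) * phiFull N z ζ u := by
  set D : ℂ := (a : ℂ) * d - b * c with hD
  have hu1' : u * (c : ℂ) + d ≠ 0 := by rwa [mul_comm]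
  have hfac : ∀ v : ℂ, (c : ℂ) * v + d ≠ 0 →
      f u - f v = D * (u - v) / (((c : ℂ) * u + d) * ((c : ℂ) * v + d)) := by
    intro v hv
    rw [hf, hf]
    field_simp
    ring
  have hlast : f u - (a : ℂ) / c = -D / ((c : ℂ) * ((c : ℂ) * u + d)) := by
    rw [hf]
    field_simp
    ring
  have hnum : ∏ i, (f u - f (ζ i))
      = (D ^ N * ∏ i, (u - ζ i)) / (((c : ℂ) * u + d) ^ N * ∏ i, ((c : ℂ) * ζ i + d)) := by
    rw [show ∏ i, (f u - f (ζ i))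
        = ∏ i, (D * (u - ζ i) / (((c : ℂ) * u + d) * ((c : ℂ) * ζ i + d))) from
      Finset.prod_congr rfl fun i _ => hfac _ (hζfin i)]
    rw [Finset.prod_div_distrib, Finset.prod_mul_distrib, Finset.prod_mul_distrib,
      Finset.prod_const, Finset.prod_const, Finset.card_univ, Fintype.card_fin]
  have hden : ∏ r : Fin N, (f u - zt r.castSucc)
      = (D ^ N * ∏ r, (u - z r)) / (((c : ℂ) * u + d) ^ N * ∏ r, ((c : ℂ) * z r + d)) := by
    rw [show ∏ r : Fin N, (f u - zt r.castSucc)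
        = ∏ r, (D * (u - z r) / (((c : ℂ) * u + d) * ((c : ℂ) * z r + d))) from
      Finset.prod_congr rfl fun r _ => by rw [hzt]; exact hfac _ (hzfin r)]
    rw [Finset.prod_div_distrib, Finset.prod_mul_distrib, Finset.prod_mul_distrib,
      Finset.prod_const, Finset.prod_const, Finset.card_univ, Fintype.card_fin]
  have hPz : (∏ r, (u - z r)) ≠ 0 :=
    Finset.prod_ne_zero_iff.mpr fun r _ => sub_ne_zero.mpr (hu2 r)
  have hQz : (∏ r, ((c : ℂ) * z r + d)) ≠ 0 :=
    Finset.prod_ne_zero_iff.mpr fun r _ => hzfin r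
  have hQζ : (∏ i, ((c : ℂ) * ζ i + d)) ≠ 0 :=
    Finset.prod_ne_zero_iff.mpr fun i _ => hζfin i
  have hDN : D ^ N ≠ 0 := pow_ne_zero _ hdet
  have hKN : ((c : ℂ) * u + d) ^ N ≠ 0 := pow_ne_zero _ hu1
  have hE : f u - (a : ℂ) / c ≠ 0 := by
    rw [hlast]
    exact div_ne_zero (neg_ne_zero.mpr hdet) (mul_ne_zero hc hu1)
  rw [phiTFull, phiFull, Fin.prod_univ_castSucc (f := fun r => f u - zt r),
    hztlast, hnum, hden, hω]
  obtain ⟨E, hEe⟩ : ∃ E, f u - (a : ℂ) / c = E := ⟨_, rfl⟩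
  rw [hEe] at hE ⊢
  field_simp

lemma auxB (N : ℕ) (z ζ : Fin N → ℂ)
    (a b c d : ℝ) (hdet : (a : ℂ) * d - b * c ≠ 0) (hc : (c : ℂ) ≠ 0)
    (hzfin : ∀ r, (c : ℂ) * z r + d ≠ 0)
    (hζfin : ∀ i, (c : ℂ) * ζ i + d ≠ 0)
    (f : ℂ → ℂ) (hf : ∀ v, f v = ((a : ℂ) * v + b) / ((c : ℂ) * v + d))
    (zt : Fin (N + 1) → ℂ) (hzt : ∀ r : Fin N, zt r.castSucc = f (z r))
    (hztlast : zt (Fin.last N) = (a : ℂ) / c)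
    (ω : ℂ) (hω : ω = (∏ r, ((c : ℂ) * z r + d)) / ∏ i, ((c : ℂ) * ζ i + d))
    (u : ℂ) (hu1 : (c : ℂ) * u + d ≠ 0) (hu2 : ∀ r, u ≠ z r) (r : Fin N) :
    (f u - zt r.castSucc) * phiTFull N zt (fun i => f (ζ i)) (f u)
        = ω * c * ((c : ℂ) * zt r.castSucc - a) / ((a : ℂ) * d - b * c)
          * ((u - z r) * phiFull N z ζ u) := by
  rw [auxA N z ζ a b c d hdet hc hzfin hζfin f hf zt hzt hztlast ω hω u hu1 hu2]
  set D : ℂ := (a : ℂ) * d - b * c with hD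
  have hu1' : u * (c : ℂ) + d ≠ 0 := by rwa [mul_comm]
  have hKr := hzfin r
  have h1 : f u - zt r.castSucc
      = D * (u - z r) / (((c : ℂ) * u + d) * ((c : ℂ) * z r + d)) := by
    rw [hzt, hf, hf]
    field_simp
    ring
  have h2 : (c : ℂ) * zt r.castSucc - a = -D / ((c : ℂ) * z r + d) := by
    rw [hzt, hf]
    field_simp
    ring
  have hlast : f u - (a : ℂ) / c = -D / ((c : ℂ) * ((c : ℂ) * u + d)) := by
    rw [hf]
    field_simp
    ring
  rw [h1, h2, hlast]
  field_simp

/-- Transformation relations of the factorised twist functions under the Möbius change of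
spectral parameter `z̃ = f(z) = (az+b)/(cz+d)`:
(i) `φ̃_±(f(z)) = (ω_± / (f(z) - a/c)) φ_±(z)`, and
(ii) `φ̃^r_±(f(z)) = (ω_± c (c z̃_r - a)/(ad-bc)) φ^r_±(z)` for `r ∈ {1,…,N}`,
where `φ^r_±(z) = (z - z_r) φ_±(z)` and `φ̃^r_±(z̃) = (z̃ - z̃_r) φ̃_±(z̃)`. -/
theorem statement8 (N : ℕ) (hN : 1 ≤ N) (z : Fin N → ℂ) (hz : Function.Injective z)
    (ζp ζm : Fin N → ℂ) (hζp : ∀ i r, ζp i ≠ z r) (hζm : ∀ i r, ζm i ≠ z r)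
    (a b c d : ℝ) (hdet : (a : ℂ) * d - b * c ≠ 0) (hc : (c : ℂ) ≠ 0)
    (hzfin : ∀ r, (c : ℂ) * z r + d ≠ 0)
    (hζpfin : ∀ i, (c : ℂ) * ζp i + d ≠ 0) (hζmfin : ∀ i, (c : ℂ) * ζm i + d ≠ 0)
    (f : ℂ → ℂ) (hf : ∀ v, f v = ((a : ℂ) * v + b) / ((c : ℂ) * v + d))
    (zt : Fin (N + 1) → ℂ) (hzt : ∀ r : Fin N, zt r.castSucc = f (z r))
    (hztlast : zt (Fin.last N) = (a : ℂ) / c)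
    (ωp ωm : ℂ)
    (hωp : ωp = (∏ r, ((c : ℂ) * z r + d)) / ∏ i, ((c : ℂ) * ζp i + d))
    (hωm : ωm = (∏ r, ((c : ℂ) * z r + d)) / ∏ i, ((c : ℂ) * ζm i + d))
    (u : ℂ) (hu1 : (c : ℂ) * u + d ≠ 0) (hu2 : ∀ r, u ≠ z r) :
    (phiTFull N zt (fun i => f (ζp i)) (f u)
        = ωp / (f u - (a : ℂ) / c) * phiFull N z ζp u ∧
      phiTFull N zt (fun i => f (ζm i)) (f u)
        = ωm / (f u - (a : ℂ) / c) * phiFull N z ζm u) ∧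
    ∀ r : Fin N,
      (f u - zt r.castSucc) * phiTFull N zt (fun i => f (ζp i)) (f u)
          = ωp * c * ((c : ℂ) * zt r.castSucc - a) / ((a : ℂ) * d - b * c)
            * ((u - z r) * phiFull N z ζp u) ∧
      (f u - zt r.castSucc) * phiTFull N zt (fun i => f (ζm i)) (f u)
          = ωm * c * ((c : ℂ) * zt r.castSucc - a) / ((a : ℂ) * d - b * c)
            * ((u - z r) * phiFull N z ζm u) := by
  refine ⟨⟨auxA N z ζp a b c d hdet hc hzfin hζpfin f hf zt hzt hztlast ωp hωp u hu1 hu2,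
    auxA N z ζm a b c d hdet hc hzfin hζmfin f hf zt hzt hztlast ωm hωm u hu1 hu2⟩, fun r =>
    ⟨auxB N z ζp a b c d hdet hc hzfin hζpfin f hf zt hzt hztlast ωp hωp u hu1 hu2 r,
      auxB N z ζm a b c d hdet hc hzfin hζmfin f hf zt hzt hztlast ωm hωm u hu1 hu2 r⟩⟩
end

section
/- Set ℓ̃^∞ = ℓ^∞·(ad−bc)/(c²·ω_+·ω_−). Then for every z ∈ ℂ with c·z + d ≠ 0 and z ≠ z_r for all r ∈ {1,…,N}: ( −ℓ̃^∞ · φ̃_+(f(z)) · φ̃_−(f(z)) ) · (ad−bc)/(c·z+d)² = −ℓ^∞ · φ_+(z) · φ_−(z). That is, under the change of spectral parameter z̃ = f(z) the twist function φ = −ℓ^∞ φ_+ φ_− transforms as a 1-form into the factorised gauged twist function φ̃ = −ℓ̃^∞ φ̃_+ φ̃_−. -/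
lemma fdiff (a b c d u v : ℂ) (hu : c*u+d ≠ 0) (hv : c*v+d ≠ 0) :
    (a*u+b)/(c*u+d) - (a*v+b)/(c*v+d) = (a*d-b*c)*(u-v)/((c*u+d)*(c*v+d)) := by
  rw [div_sub_div _ _ hu hv]
  ring

lemma prod_key (N : ℕ) (a b c d u : ℂ) (ζ : Fin N → ℂ)
    (hu : c*u+d ≠ 0) (hζ : ∀ i, c*ζ i+d ≠ 0) :
    (∏ i, ((a*u+b)/(c*u+d) - (a*ζ i+b)/(c*ζ i+d)))
      = (a*d-b*c)^N * (∏ i, (u - ζ i)) / ((c*u+d)^N * ∏ i, (c*ζ i+d)) := by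
  rw [Finset.prod_congr rfl (fun i _ => fdiff a b c d u (ζ i) hu (hζ i))]
  rw [Finset.prod_div_distrib, Finset.prod_mul_distrib, Finset.prod_mul_distrib]
  simp [Finset.prod_const, Finset.card_univ]

set_option maxHeartbeats 1000000 in

/-- With `ℓ̃^∞ = ℓ^∞ (ad-bc)/(c² ω_+ ω_-)`, under the change of spectral parameter
`z̃ = f(z)` the twist function `φ = -ℓ^∞ φ_+ φ_-` transforms as a 1-form into the
factorised gauged twist function `φ̃ = -ℓ̃^∞ φ̃_+ φ̃_-`:
`φ̃(f(z)) · (ad-bc)/(cz+d)² = φ(z)`. -/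
theorem statement9 (N : ℕ) (hN : 1 ≤ N) (z : Fin N → ℂ) (hz : Function.Injective z)
    (ζp ζm : Fin N → ℂ) (hζp : ∀ i r, ζp i ≠ z r) (hζm : ∀ i r, ζm i ≠ z r)
    (linf : ℂ)
    (a b c d : ℝ) (hdet : (a : ℂ) * d - b * c ≠ 0) (hc : (c : ℂ) ≠ 0)
    (hzfin : ∀ r, (c : ℂ) * z r + d ≠ 0)
    (hζpfin : ∀ i, (c : ℂ) * ζp i + d ≠ 0) (hζmfin : ∀ i, (c : ℂ) * ζm i + d ≠ 0)
    (f : ℂ → ℂ) (hf : ∀ v, f v = ((a : ℂ) * v + b) / ((c : ℂ) * v + d))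
    (zt : Fin (N + 1) → ℂ) (hzt : ∀ r : Fin N, zt r.castSucc = f (z r))
    (hztlast : zt (Fin.last N) = (a : ℂ) / c)
    (ωp ωm : ℂ)
    (hωp : ωp = (∏ r, ((c : ℂ) * z r + d)) / ∏ i, ((c : ℂ) * ζp i + d))
    (hωm : ωm = (∏ r, ((c : ℂ) * z r + d)) / ∏ i, ((c : ℂ) * ζm i + d))
    (ltinf : ℂ)
    (hltinf : ltinf = linf * ((a : ℂ) * d - b * c) / ((c : ℂ) ^ 2 * ωp * ωm))
    (u : ℂ) (hu1 : (c : ℂ) * u + d ≠ 0) (hu2 : ∀ r, u ≠ z r) :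
    (-ltinf * phiTFull N zt (fun i => f (ζp i)) (f u)
        * phiTFull N zt (fun i => f (ζm i)) (f u))
      * (((a : ℂ) * d - b * c) / ((c : ℂ) * u + d) ^ 2)
    = -linf * phiFull N z ζp u * phiFull N z ζm u := by
  have hPz : (∏ r, (u - z r)) ≠ 0 :=
    Finset.prod_ne_zero_iff.mpr fun r _ => sub_ne_zero.mpr (hu2 r)
  have hQz : (∏ r, ((c : ℂ) * z r + d)) ≠ 0 :=
    Finset.prod_ne_zero_iff.mpr fun r _ => hzfin r
  have hQp : (∏ i, ((c : ℂ) * ζp i + d)) ≠ 0 :=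
    Finset.prod_ne_zero_iff.mpr fun i _ => hζpfin i
  have hQm : (∏ i, ((c : ℂ) * ζm i + d)) ≠ 0 :=
    Finset.prod_ne_zero_iff.mpr fun i _ => hζmfin i
  have hlast : f u - zt (Fin.last N) = -((a : ℂ)*d-b*c)/(c*((c : ℂ)*u+d)) := by
    rw [hztlast, hf, div_sub_div _ _ hu1 hc]; ring
  have hTden : (∏ r : Fin (N+1), (f u - zt r)) =
      (((a : ℂ)*d-b*c)^N * (∏ r, (u - z r)) / (((c : ℂ)*u+d)^N * ∏ r, ((c : ℂ)*z r+d)))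
        * (-((a : ℂ)*d-b*c)/(c*((c : ℂ)*u+d))) := by
    rw [Fin.prod_univ_castSucc, hlast]
    congr 1
    rw [Finset.prod_congr rfl (fun r _ => by rw [hzt, hf, hf] :
      ∀ r ∈ Finset.univ, f u - zt (Fin.castSucc r)
        = ((a : ℂ)*u+b)/((c : ℂ)*u+d) - ((a : ℂ)*z r+b)/((c : ℂ)*z r+d))]
    exact prod_key N a b c d u z hu1 hzfin
  have hTp : (∏ i, (f u - f (ζp i))) =
      ((a : ℂ)*d-b*c)^N * (∏ i, (u - ζp i)) / (((c : ℂ)*u+d)^N * ∏ i, ((c : ℂ)*ζp i+d)) := by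
    rw [Finset.prod_congr rfl (fun i _ => by rw [hf, hf] :
      ∀ i ∈ Finset.univ, f u - f (ζp i)
        = ((a : ℂ)*u+b)/((c : ℂ)*u+d) - ((a : ℂ)*ζp i+b)/((c : ℂ)*ζp i+d))]
    exact prod_key N a b c d u ζp hu1 hζpfin
  have hTm : (∏ i, (f u - f (ζm i))) =
      ((a : ℂ)*d-b*c)^N * (∏ i, (u - ζm i)) / (((c : ℂ)*u+d)^N * ∏ i, ((c : ℂ)*ζm i+d)) := by
    rw [Finset.prod_congr rfl (fun i _ => by rw [hf, hf] :
      ∀ i ∈ Finset.univ, f u - f (ζm i)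
        = ((a : ℂ)*u+b)/((c : ℂ)*u+d) - ((a : ℂ)*ζm i+b)/((c : ℂ)*ζm i+d))]
    exact prod_key N a b c d u ζm hu1 hζmfin
  set D := (a : ℂ)*d-b*c with hD
  set E := (c : ℂ)*u+d with hE
  set Pz := ∏ r, (u - z r) with hPz'
  set Qz := ∏ r, ((c : ℂ)*z r+d) with hQz'
  set Pp := ∏ i, (u - ζp i) with hPp'
  set Qp := ∏ i, ((c : ℂ)*ζp i+d) with hQp'
  set Pm := ∏ i, (u - ζm i) with hPm'
  set Qm := ∏ i, ((c : ℂ)*ζm i+d) with hQm'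
  clear_value D E Pz Qz Pp Qp Pm Qm
  have hpow1 : D^N ≠ 0 := pow_ne_zero _ hdet
  have hpow2 : E^N ≠ 0 := pow_ne_zero _ hu1
  have hTP : phiTFull N zt (fun i => f (ζp i)) (f u)
      = -((c : ℂ)*E/D) * (Qz/Qp) * (Pp/Pz) := by
    rw [phiTFull, hTp, hTden]
    field_simp
  have hTM : phiTFull N zt (fun i => f (ζm i)) (f u)
      = -((c : ℂ)*E/D) * (Qz/Qm) * (Pm/Pz) := by
    rw [phiTFull, hTm, hTden]
    field_simp
  have hωp0 : ωp ≠ 0 := by rw [hωp]; exact div_ne_zero hQz hQp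
  have hωm0 : ωm ≠ 0 := by rw [hωm]; exact div_ne_zero hQz hQm
  rw [hTP, hTM, phiFull, phiFull, hltinf, ← hωp, ← hωm, ← hPp', ← hPm', ← hPz']
  field_simp [hωp0, hωm0, hPz, hdet, hc, hu1]
end

section
/- Define Θ(z,w) = (ℓ^∞/2)·φ_+(z)·φ_−(w)/(z−w) and Θ̃(z̃,w̃) = (ℓ̃^∞/2)·φ̃_+(z̃)·φ̃_−(w̃)/(z̃−w̃), where ℓ̃^∞ = ℓ^∞·(ad−bc)/(c²·ω_+·ω_−). Then for all z, w ∈ ℂ with z ≠ w, c·z+d ≠ 0, c·w+d ≠ 0, and z, w both different from every z_r: Θ̃( f(z), f(w) ) · (ad−bc)/(c·z+d)² · (ad−bc)/(c·w+d)² = Θ(z,w). That is, Θ transforms as a bi-differential under the change of spectral parameter z̃ = f(z). -/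
lemma aux10 (linf c D Cu Cv Pu Pv Qu Qv Zp Zm Zz uv En Un Vn : ℂ)
    (hc : c ≠ 0) (hD : D ≠ 0) (hCu : Cu ≠ 0) (hCv : Cv ≠ 0)
    (hQu : Qu ≠ 0) (hQv : Qv ≠ 0) (hZp : Zp ≠ 0) (hZm : Zm ≠ 0) (hZz : Zz ≠ 0)
    (huv : uv ≠ 0) (hEn : En ≠ 0) (hUn : Un ≠ 0) (hVn : Vn ≠ 0) :
    (linf * D / (c ^ 2 * (Zz / Zp) * (Zz / Zm)) / 2
        * (En * Pu / (Un * Zp) / (En * Qu / (Un * Zz) * (-D / (c * Cu))))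
        * (En * Pv / (Vn * Zm) / (En * Qv / (Vn * Zz) * (-D / (c * Cv))))
        / (D * uv / (Cu * Cv)))
      * (D / Cu ^ 2) * (D / Cv ^ 2)
    = linf / 2 * (Pu / Qu) * (Pv / Qv) / uv := by
  simp only [div_mul_div_comm, div_div_eq_mul_div, div_div, mul_div_assoc', div_mul_eq_mul_div]
  rw [div_eq_div_iff
    (by simp [mul_eq_zero, pow_eq_zero_iff, neg_eq_zero, hc, hD, hCu, hCv, hQu, hQv, hZp, hZm,
      hZz, huv, hEn, hUn, hVn])
    (by simp [mul_eq_zero, hQu, hQv, huv])]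
  ring

/-- The quantity `Θ(z,w) = (ℓ^∞/2) φ_+(z) φ_-(w)/(z-w)` transforms as a bi-differential
under the change of spectral parameter `z̃ = f(z)`:
`Θ̃(f(z), f(w)) · (ad-bc)/(cz+d)² · (ad-bc)/(cw+d)² = Θ(z,w)`, where
`Θ̃(z̃,w̃) = (ℓ̃^∞/2) φ̃_+(z̃) φ̃_-(w̃)/(z̃-w̃)` and `ℓ̃^∞ = ℓ^∞ (ad-bc)/(c² ω_+ ω_-)`. -/
theorem statement10 (N : ℕ) (hN : 1 ≤ N) (z : Fin N → ℂ) (hz : Function.Injective z)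
    (ζp ζm : Fin N → ℂ) (hζp : ∀ i r, ζp i ≠ z r) (hζm : ∀ i r, ζm i ≠ z r)
    (linf : ℂ)
    (a b c d : ℝ) (hdet : (a : ℂ) * d - b * c ≠ 0) (hc : (c : ℂ) ≠ 0)
    (hzfin : ∀ r, (c : ℂ) * z r + d ≠ 0)
    (hζpfin : ∀ i, (c : ℂ) * ζp i + d ≠ 0) (hζmfin : ∀ i, (c : ℂ) * ζm i + d ≠ 0)
    (f : ℂ → ℂ) (hf : ∀ v, f v = ((a : ℂ) * v + b) / ((c : ℂ) * v + d))
    (zt : Fin (N + 1) → ℂ) (hzt : ∀ r : Fin N, zt r.castSucc = f (z r))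
    (hztlast : zt (Fin.last N) = (a : ℂ) / c)
    (ωp ωm : ℂ)
    (hωp : ωp = (∏ r, ((c : ℂ) * z r + d)) / ∏ i, ((c : ℂ) * ζp i + d))
    (hωm : ωm = (∏ r, ((c : ℂ) * z r + d)) / ∏ i, ((c : ℂ) * ζm i + d))
    (ltinf : ℂ)
    (hltinf : ltinf = linf * ((a : ℂ) * d - b * c) / ((c : ℂ) ^ 2 * ωp * ωm))
    (u v : ℂ) (huv : u ≠ v)
    (hu1 : (c : ℂ) * u + d ≠ 0) (hv1 : (c : ℂ) * v + d ≠ 0)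
    (hu2 : ∀ r, u ≠ z r) (hv2 : ∀ r, v ≠ z r) :
    (ltinf / 2 * phiTFull N zt (fun i => f (ζp i)) (f u)
        * phiTFull N zt (fun i => f (ζm i)) (f v) / (f u - f v))
      * (((a : ℂ) * d - b * c) / ((c : ℂ) * u + d) ^ 2)
      * (((a : ℂ) * d - b * c) / ((c : ℂ) * v + d) ^ 2)
    = linf / 2 * phiFull N z ζp u * phiFull N z ζm v / (u - v) := by
  set D : ℂ := (a : ℂ) * d - b * c with hD
  have key : ∀ s t : ℂ, (c : ℂ) * s + d ≠ 0 → (c : ℂ) * t + d ≠ 0 →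
      f s - f t = D * (s - t) / (((c : ℂ) * s + d) * ((c : ℂ) * t + d)) := by
    intro s t hs ht
    rw [hf, hf, hD]
    rw [div_sub_div _ _ hs ht, div_eq_div_iff (mul_ne_zero hs ht) (mul_ne_zero hs ht)]
    ring
  have keyc : ∀ s : ℂ, (c : ℂ) * s + d ≠ 0 →
      f s - (a : ℂ) / c = -D / ((c : ℂ) * ((c : ℂ) * s + d)) := by
    intro s hs
    rw [hf, hD]
    rw [div_sub_div _ _ hs hc, div_eq_div_iff (mul_ne_zero hs hc) (mul_ne_zero hc hs)]
    ring
  have hnum : ∀ (ζ : Fin N → ℂ) (s : ℂ), (c : ℂ) * s + d ≠ 0 →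
      (∀ i, (c : ℂ) * ζ i + d ≠ 0) →
      (∏ i, (f s - f (ζ i))) =
        D ^ N * (∏ i, (s - ζ i)) / (((c : ℂ) * s + d) ^ N * ∏ i, ((c : ℂ) * ζ i + d)) := by
    intro ζ s hs hζ
    calc (∏ i, (f s - f (ζ i)))
        = ∏ i, (D * (s - ζ i) / (((c : ℂ) * s + d) * ((c : ℂ) * ζ i + d))) :=
          Finset.prod_congr rfl fun i _ => key s (ζ i) hs (hζ i)
      _ = _ := by
          simp [Finset.prod_div_distrib, Finset.prod_mul_distrib, Finset.prod_const]
  have hden : ∀ s : ℂ, (c : ℂ) * s + d ≠ 0 →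
      (∏ r, (f s - zt r)) =
        (D ^ N * (∏ r, (s - z r)) / (((c : ℂ) * s + d) ^ N * ∏ r, ((c : ℂ) * z r + d)))
          * (-D / ((c : ℂ) * ((c : ℂ) * s + d))) := by
    intro s hs
    rw [Fin.prod_univ_castSucc]
    congr 1
    · calc (∏ r : Fin N, (f s - zt r.castSucc))
          = ∏ r : Fin N, (f s - f (z r)) := by
            exact Finset.prod_congr rfl fun r _ => by rw [hzt]
        _ = ∏ r, (D * (s - z r) / (((c : ℂ) * s + d) * ((c : ℂ) * z r + d))) :=
            Finset.prod_congr rfl fun r _ => key s (z r) hs (hzfin r)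
        _ = _ := by
            simp [Finset.prod_div_distrib, Finset.prod_mul_distrib, Finset.prod_const]
    · rw [hztlast]; exact keyc s hs
  have hZp : (∏ i, ((c : ℂ) * ζp i + d)) ≠ 0 := Finset.prod_ne_zero_iff.mpr fun i _ => hζpfin i
  have hZm : (∏ i, ((c : ℂ) * ζm i + d)) ≠ 0 := Finset.prod_ne_zero_iff.mpr fun i _ => hζmfin i
  have hZz : (∏ r, ((c : ℂ) * z r + d)) ≠ 0 := Finset.prod_ne_zero_iff.mpr fun r _ => hzfin r
  have hQu : (∏ r, (u - z r)) ≠ 0 :=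
    Finset.prod_ne_zero_iff.mpr fun r _ => sub_ne_zero.mpr (hu2 r)
  have hQv : (∏ r, (v - z r)) ≠ 0 :=
    Finset.prod_ne_zero_iff.mpr fun r _ => sub_ne_zero.mpr (hv2 r)
  have huv' : u - v ≠ 0 := sub_ne_zero.mpr huv
  have hDn : D ^ N ≠ 0 := pow_ne_zero _ hdet
  have hun : ((c : ℂ) * u + d) ^ N ≠ 0 := pow_ne_zero _ hu1
  have hvn : ((c : ℂ) * v + d) ^ N ≠ 0 := pow_ne_zero _ hv1
  rw [phiTFull, phiTFull, phiFull, phiFull, hnum ζp u hu1 hζpfin, hnum ζm v hv1 hζmfin,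
    hden u hu1, hden v hv1, key u v hu1 hv1, hltinf, hωp, hωm]
  exact aux10 linf c D ((c : ℂ) * u + d) ((c : ℂ) * v + d)
    (∏ i, (u - ζp i)) (∏ i, (v - ζm i)) (∏ r, (u - z r)) (∏ r, (v - z r))
    (∏ i, ((c : ℂ) * ζp i + d)) (∏ i, ((c : ℂ) * ζm i + d)) (∏ r, ((c : ℂ) * z r + d))
    (u - v) (D ^ N) (((c : ℂ) * u + d) ^ N) (((c : ℂ) * v + d) ^ N)
    hc hdet hu1 hv1 hQu hQv hZp hZm hZz huv' hDn hun hvn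
end

section
/- For every r ∈ {1,…,M}, one has Σ_{s=1}^{M} ρ_{rs} = κ_r/2 and Σ_{s=1}^{M} ρ_{sr} = −κ_r/2. Equivalently, Σ_{s=1}^{M} ρ_{rs} − κ_r/2 = 0 and Σ_{s=1}^{M} ρ_{sr} + κ_r/2 = 0 (the identity ensuring that the constraint of the gauged coupled σ-model vanishes on-shell and that its action is gauge invariant). -/
open Finset Polynomial

lemma lagrange_eval (M : ℕ) (hM : 1 ≤ M) (w : Fin M → ℂ) (hw : Function.Injective w)
    (η : Fin (M-1) → ℂ) (z : ℂ) :
    (∏ i, (z - η i)) = ∑ s, ((∏ i, (w s - η i)) / ∏ t ∈ univ.erase s, (w s - w t)) *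
      ∏ t ∈ univ.erase s, (z - w t) := by
  classical
  set P : Polynomial ℂ := ∏ i, (X - C (η i)) with hP
  have hinj : Set.InjOn w (univ : Finset (Fin M)) := fun a _ b _ h => hw h
  have hdeg : P.degree < (univ : Finset (Fin M)).card := by
    have : P.degree = (M - 1 : ℕ) := by
      rw [hP, degree_prod]; simp [degree_X_sub_C]
    rw [this]
    simp only [card_univ, Fintype.card_fin]
    exact_mod_cast Nat.sub_lt_of_pos_le (by norm_num) hM
  have hrep := Lagrange.eq_interpolate hinj hdeg
  have hevP : ∀ y : ℂ, P.eval y = ∏ i, (y - η i) := by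
    intro y; rw [hP, eval_prod]; simp
  have := congrArg (eval z) hrep
  rw [hevP] at this
  rw [this, Lagrange.interpolate_apply, eval_finset_sum]
  refine Finset.sum_congr rfl fun s _ => ?_
  rw [eval_mul, eval_C, hevP, Lagrange.basis, eval_prod]
  have : ∀ t ∈ univ.erase s, eval z (Lagrange.basisDivisor (w s) (w t))
      = (w s - w t)⁻¹ * (z - w t) := by
    intro t ht
    rw [Lagrange.basisDivisor]; simp
  rw [Finset.prod_congr rfl this, Finset.prod_mul_distrib, Finset.prod_inv_distrib,
    div_eq_mul_inv]
  ring


lemma deriv_psiReg (M : ℕ) (hM : 1 ≤ M) (w : Fin M → ℂ) (hw : Function.Injective w)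
    (η : Fin (M-1) → ℂ) (r : Fin M) :
    deriv (psiReg M w η r) (w r)
      = ∑ s ∈ univ.erase r, psiReg M w η s (w s) / (w r - w s) := by
  classical
  set c : Fin M → ℂ := fun s => psiReg M w η s (w s) with hc
  set g : ℂ → ℂ := fun z => c r + ∑ s ∈ univ.erase r, c s * ((z - w r)/(z - w s)) with hg
  have hne : ∀ s ∈ univ.erase r, w r - w s ≠ 0 := by
    intro s hs
    have : s ≠ r := (mem_erase.mp hs).1
    exact sub_ne_zero.mpr fun h => this (hw h.symm)
  have hgderiv : HasDerivAt g (∑ s ∈ univ.erase r, c s / (w r - w s)) (w r) := by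
    refine HasDerivAt.const_add _ (HasDerivAt.fun_sum fun s hs => ?_)
    have h1 : HasDerivAt (fun z : ℂ => z - w r) 1 (w r) := (hasDerivAt_id _).sub_const _
    have h2 : HasDerivAt (fun z : ℂ => z - w s) 1 (w r) := (hasDerivAt_id _).sub_const _
    have := (h1.fun_div h2 (hne s hs)).const_mul (c s)
    convert this using 1
    · rfl
    simp only [sub_self, zero_mul, sub_zero, one_mul]
    rw [sq, div_mul_cancel_left₀ (hne s hs), div_eq_mul_inv]
  have heq : psiReg M w η r =ᶠ[nhds (w r)] g := by
    have hev : ∀ᶠ z in nhds (w r), ∀ s ∈ univ.erase r, z ≠ w s := by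
      rw [Filter.eventually_all_finset]
      intro s hs
      exact eventually_ne_nhds (sub_ne_zero.mp (hne s hs))
    filter_upwards [hev] with z hz
    have hQr : (∏ t ∈ univ.erase r, (z - w t)) ≠ 0 :=
      Finset.prod_ne_zero_iff.mpr fun t ht => sub_ne_zero.mpr (hz t ht)
    have key := lagrange_eval M hM w hw η z
    have hsplit : (∑ s, c s * ∏ t ∈ univ.erase s, (z - w t))
        = c r * (∏ t ∈ univ.erase r, (z - w t))
          + ∑ s ∈ univ.erase r, c s * ∏ t ∈ univ.erase s, (z - w t) :=
      (Finset.add_sum_erase _ _ (mem_univ r)).symm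
    have hratio : ∀ s ∈ univ.erase r,
        (c s * ∏ t ∈ univ.erase s, (z - w t)) / (∏ t ∈ univ.erase r, (z - w t))
          = c s * ((z - w r)/(z - w s)) := by
      intro s hs
      have hzs : z - w s ≠ 0 := sub_ne_zero.mpr (hz s hs)
      have hprod : (z - w s) * ∏ t ∈ univ.erase s, (z - w t)
          = (z - w r) * ∏ t ∈ univ.erase r, (z - w t) := by
        rw [Finset.mul_prod_erase _ (fun t => z - w t) (mem_univ s),
          Finset.mul_prod_erase _ (fun t => z - w t) (mem_univ r)]
      rw [mul_div_assoc]
      congr 1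
      rw [div_eq_div_iff hQr hzs]
      linear_combination hprod
    show (∏ i, (z - η i)) / (∏ t ∈ univ.erase r, (z - w t)) = g z
    rw [key]
    have : ∀ s, ((∏ i, (w s - η i)) / ∏ t ∈ univ.erase s, (w s - w t)) = c s := fun s => rfl
    simp_rw [this]
    rw [hsplit, add_div, mul_div_cancel_right₀ _ hQr, Finset.sum_div,
      Finset.sum_congr rfl hratio]
  rw [heq.deriv_eq, hgderiv.deriv]

/-- The identity `∑_s ρ_{rs} = κ_r/2` and `∑_s ρ_{sr} = -κ_r/2` ensuring that the
constraint of the gauged coupled σ-model vanishes on-shell and that its action is gauge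
invariant. -/
theorem statement11 (M : ℕ) (hM : 1 ≤ M) (w : Fin M → ℂ) (hw : Function.Injective w)
    (ηp ηm : Fin (M - 1) → ℂ) (hηp : ∀ i r, ηp i ≠ w r) (hηm : ∀ i r, ηm i ≠ w r)
    (lam : ℂ)
    (κ : Fin M → ℂ)
    (hκ : ∀ r, κ r = lam / 2 *
      (psiReg M w ηp r (w r) * deriv (psiReg M w ηm r) (w r)
        + deriv (psiReg M w ηp r) (w r) * psiReg M w ηm r (w r)))
    (ρ : Fin M → Fin M → ℂ)
    (hρdiag : ∀ r, ρ r r = lam / 4 *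
      (deriv (psiReg M w ηp r) (w r) * psiReg M w ηm r (w r)
        - psiReg M w ηp r (w r) * deriv (psiReg M w ηm r) (w r)))
    (hρoff : ∀ r s, r ≠ s →
      ρ r s = lam / 2 * psiReg M w ηp r (w r) * psiReg M w ηm s (w s) / (w r - w s)) :
    ∀ r, (∑ s, ρ r s = κ r / 2) ∧ (∑ s, ρ s r = -(κ r) / 2) := by
  intro r
  have hDp := deriv_psiReg M hM w hw ηp r
  have hDm := deriv_psiReg M hM w hw ηm r
  constructor
  · rw [← Finset.add_sum_erase _ (fun s => ρ r s) (mem_univ r)]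
    have hsum : ∑ s ∈ univ.erase r, ρ r s
        = lam / 2 * psiReg M w ηp r (w r) * deriv (psiReg M w ηm r) (w r) := by
      rw [hDm, Finset.mul_sum]
      refine Finset.sum_congr rfl fun s hs => ?_
      rw [hρoff r s (Ne.symm (mem_erase.mp hs).1), mul_div_assoc]
    rw [hsum, hρdiag, hκ]
    ring
  · rw [← Finset.add_sum_erase _ (fun s => ρ s r) (mem_univ r)]
    have hsum : ∑ s ∈ univ.erase r, ρ s r
        = -(lam / 2 * psiReg M w ηm r (w r) * deriv (psiReg M w ηp r) (w r)) := by
      rw [hDp, Finset.mul_sum, ← Finset.sum_neg_distrib]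
      refine Finset.sum_congr rfl fun s hs => ?_
      rw [hρoff s r (mem_erase.mp hs).1,
        show w s - w r = -(w r - w s) from by ring, div_neg]
      ring
    rw [hsum, hρdiag, hκ]
    ring
end

section
/- Define Θ_{+,r}(z) = (λ/2)·ψ^r_+(z)·ψ^r_−(w_r)/(z−w_r)² and Θ_{−,r}(z) = −(λ/2)·ψ^r_−(z)·ψ^r_+(w_r)/(z−w_r)². Then for all r ≠ s in {1,…,M}: the function z ↦ (z−w_s)·Θ_{+,r}(z) tends to ρ_{sr} as z tends to w_s within ℂ∖{w_s}, and the function z ↦ (z−w_s)·Θ_{−,r}(z) tends to ρ_{rs} as z tends to w_s within ℂ∖{w_s}. That is, the residue of the 1-form Θ_{+,r}(z)dz at z = w_s equals ρ_{sr}, and the residue of Θ_{−,r}(z)dz at z = w_s equals ρ_{rs}, for s ≠ r. -/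
lemma alg_statement13 (k₁ k₂ x y a b : ℂ) (hx : x ≠ 0) (hy : y ≠ 0) :
    k₁ * (a / (y * b)) * k₂ / y = x * (k₁ * (a / (x * b)) * k₂ / y ^ 2) := by
  rcases eq_or_ne b 0 with hb | hb
  · simp [hb]
  · field_simp

lemma key_statement13 (M : ℕ) (w : Fin M → ℂ) (hw : Function.Injective w)
    (η : Fin (M - 1) → ℂ) (k₁ k₂ : ℂ) (r s : Fin M) (hrs : r ≠ s) :
    Filter.Tendsto (fun v : ℂ => (v - w s) * (k₁ * psiReg M w η r v * k₂ / (v - w r) ^ 2))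
      (nhdsWithin (w s) {w s}ᶜ)
      (nhds (k₁ * psiReg M w η s (w s) * k₂ / (w s - w r))) := by
  have hwsr : w s ≠ w r := fun h => hrs (hw h).symm
  set A : ℂ → ℂ := fun v => ∏ i, (v - η i) with hA
  have hs_mem : s ∈ Finset.univ.erase r := Finset.mem_erase.2 ⟨hrs.symm, Finset.mem_univ _⟩
  have hr_mem : r ∈ Finset.univ.erase s := Finset.mem_erase.2 ⟨hrs, Finset.mem_univ _⟩
  set B : ℂ → ℂ := fun v => ∏ t ∈ (Finset.univ.erase r).erase s, (v - w t) with hB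
  have herase : (Finset.univ.erase r).erase s = (Finset.univ.erase s).erase r :=
    Finset.erase_right_comm
  have hprod_r : ∀ v, ∏ t ∈ Finset.univ.erase r, (v - w t) = (v - w s) * B v :=
    fun v => (Finset.mul_prod_erase _ _ hs_mem).symm
  have hprod_s : ∀ v, ∏ t ∈ Finset.univ.erase s, (v - w t) = (v - w r) * B v := by
    intro v
    rw [hB]; simp only [herase]
    exact (Finset.mul_prod_erase _ _ hr_mem).symm
  set g : ℂ → ℂ := fun v => k₁ * (A v / ∏ t ∈ Finset.univ.erase s, (v - w t)) * k₂ / (v - w r)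
    with hg
  have hden : (∏ t ∈ Finset.univ.erase s, (w s - w t)) ≠ 0 := by
    rw [Finset.prod_ne_zero_iff]
    intro t ht
    have : t ≠ s := (Finset.mem_erase.1 ht).1
    exact sub_ne_zero.2 fun h => this (hw h).symm
  have hcont : ContinuousAt g (w s) := by
    apply ContinuousAt.div
    · apply ContinuousAt.mul
      apply ContinuousAt.mul continuousAt_const
      apply ContinuousAt.div
      · exact Continuous.continuousAt (by continuity)
      · exact Continuous.continuousAt (by continuity)
      · exact hden
      · exact continuousAt_const
    · fun_prop
    · exact sub_ne_zero.2 hwsr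
  have htends : Filter.Tendsto g (nhdsWithin (w s) {w s}ᶜ) (nhds (g (w s))) :=
    hcont.continuousWithinAt.tendsto
  have hgval : g (w s) = k₁ * psiReg M w η s (w s) * k₂ / (w s - w r) := rfl
  rw [← hgval]
  apply htends.congr'
  have h1 : ∀ᶠ v in nhdsWithin (w s) {w s}ᶜ, v ≠ w s :=
    eventually_mem_nhdsWithin
  have h2 : ∀ᶠ v in nhdsWithin (w s) {w s}ᶜ, v ≠ w r :=
    Filter.Eventually.filter_mono nhdsWithin_le_nhds (eventually_ne_nhds hwsr)
  filter_upwards [h1, h2] with v hvs hvr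
  have hvs' : v - w s ≠ 0 := sub_ne_zero.2 hvs
  have hvr' : v - w r ≠ 0 := sub_ne_zero.2 hvr
  show k₁ * (A v / ∏ t ∈ Finset.univ.erase s, (v - w t)) * k₂ / (v - w r)
      = (v - w s) * (k₁ * psiReg M w η r v * k₂ / (v - w r) ^ 2)
  rw [psiReg, hprod_r v, hprod_s v]
  exact alg_statement13 k₁ k₂ (v - w s) (v - w r) (A v) (B v) hvs' hvr'

/-- With `Θ_{+,r}(v) = (λ/2) ψ^r_+(v) ψ^r_-(w_r)/(v-w_r)²` and
`Θ_{-,r}(v) = -(λ/2) ψ^r_-(v) ψ^r_+(w_r)/(v-w_r)²`, for `r ≠ s` the residue of the 1-form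
`Θ_{+,r}(v) dv` at `v = w_s` equals `ρ_{sr}` and the residue of `Θ_{-,r}(v) dv` at
`v = w_s` equals `ρ_{rs}`: i.e. `(v - w_s) Θ_{±,r}(v)` tends to these values as
`v → w_s` within `ℂ \ {w_s}`. -/
theorem statement13 (M : ℕ) (hM : 1 ≤ M) (w : Fin M → ℂ) (hw : Function.Injective w)
    (ηp ηm : Fin (M - 1) → ℂ) (hηp : ∀ i r, ηp i ≠ w r) (hηm : ∀ i r, ηm i ≠ w r)
    (lam : ℂ)
    (ρ : Fin M → Fin M → ℂ)
    (hρdiag : ∀ r, ρ r r = lam / 4 *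
      (deriv (psiReg M w ηp r) (w r) * psiReg M w ηm r (w r)
        - psiReg M w ηp r (w r) * deriv (psiReg M w ηm r) (w r)))
    (hρoff : ∀ r s, r ≠ s →
      ρ r s = lam / 2 * psiReg M w ηp r (w r) * psiReg M w ηm s (w s) / (w r - w s)) :
    ∀ r s : Fin M, r ≠ s →
      Filter.Tendsto
          (fun v : ℂ => (v - w s) *
            (lam / 2 * psiReg M w ηp r v * psiReg M w ηm r (w r) / (v - w r) ^ 2))
          (nhdsWithin (w s) {w s}ᶜ) (nhds (ρ s r)) ∧
      Filter.Tendsto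
          (fun v : ℂ => (v - w s) *
            (-(lam / 2) * psiReg M w ηm r v * psiReg M w ηp r (w r) / (v - w r) ^ 2))
          (nhdsWithin (w s) {w s}ᶜ) (nhds (ρ r s)) := by
  intro r s hrs
  constructor
  · have h := key_statement13 M w hw ηp (lam / 2) (psiReg M w ηm r (w r)) r s hrs
    have hval : ρ s r
        = lam / 2 * psiReg M w ηp s (w s) * psiReg M w ηm r (w r) / (w s - w r) :=
      hρoff s r (Ne.symm hrs)
    rw [hval]
    exact h
  · have h := key_statement13 M w hw ηm (-(lam / 2)) (psiReg M w ηp r (w r)) r s hrs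
    have hval : ρ r s
        = -(lam / 2) * psiReg M w ηm s (w s) * psiReg M w ηp r (w r) / (w s - w r) := by
      rw [hρoff r s hrs, show w r - w s = -(w s - w r) by ring, div_neg]
      ring
    rw [hval]
    exact h
end

section
/- For every z ∈ ℂ with c·z+d ≠ 0, z ≠ z_+ and z ≠ z_−, one has (ad−bc)/(c·z+d)² · [ (1/(2𝕔γ))·( 1/(f(z)−z̃_+) − 1/(f(z)−z̃_−) ) − ℓ̃_1/(f(z)−a/c)² ] = (1/(2𝕔γ))·( 1/(z−z_+) − 1/(z−z_−) ) + ℓ^∞. That is, the Yang–Baxter deformation of the gauged twist function, transported back to the original spectral parameter, replaces the constant term −ℓ^∞ of the undeformed twist function by the pair of simple poles (1/(2𝕔γ))(1/(z−z_+) − 1/(z−z_−)). -/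
set_option maxHeartbeats 2000000 in
/-- The Yang–Baxter deformation of the gauged twist function, transported back to the
original spectral parameter through `z̃ = f(z) = (az+b)/(cz+d)`, replaces the constant
term `-ℓ^∞` of the undeformed twist function by the pair of simple poles
`(1/(2𝕔γ))(1/(z-z₊) - 1/(z-z₋))`. -/
theorem statement16 (a b c d : ℝ) (hdet : (a : ℂ) * d - b * c ≠ 0) (hc : (c : ℂ) ≠ 0)
    (linf : ℂ) (hlinf : linf ≠ 0) (η : ℝ) (hη : η ≠ 0) (cc : ℂ) (hcc : cc ≠ 0)
    (lt1 γ ztp ztm zp zm : ℂ)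
    (hlt1 : lt1 = -linf * ((a : ℂ) * d - b * c) / (c : ℂ) ^ 2)
    (hγ : γ = (η : ℂ) / lt1)
    (hztp : ztp = (a : ℂ) / c + cc * η) (hztm : ztm = (a : ℂ) / c - cc * η)
    (hzp : zp = -(d : ℂ) / c - ((a : ℂ) * d - b * c) / ((c : ℂ) ^ 2 * cc * η))
    (hzm : zm = -(d : ℂ) / c + ((a : ℂ) * d - b * c) / ((c : ℂ) ^ 2 * cc * η))
    (u : ℂ) (hu : (c : ℂ) * u + d ≠ 0) (hup : u ≠ zp) (hum : u ≠ zm) :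
    ((a : ℂ) * d - b * c) / ((c : ℂ) * u + d) ^ 2 *
        (1 / (2 * cc * γ) *
            (1 / ((((a : ℂ) * u + b) / ((c : ℂ) * u + d)) - ztp)
              - 1 / ((((a : ℂ) * u + b) / ((c : ℂ) * u + d)) - ztm))
          - lt1 / ((((a : ℂ) * u + b) / ((c : ℂ) * u + d)) - (a : ℂ) / c) ^ 2)
      = 1 / (2 * cc * γ) * (1 / (u - zp) - 1 / (u - zm)) + linf := by
  have hη' : (η : ℂ) ≠ 0 := by exact_mod_cast hη
  have hdet' : (b : ℂ) * c - a * d ≠ 0 := by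
    intro h; apply hdet; linear_combination -h
  have hup' : u - zp ≠ 0 := sub_ne_zero.mpr hup
  have hum' : u - zm ≠ 0 := sub_ne_zero.mpr hum
  have hup2 : u - zp = -(((b : ℂ) * c - a * d) - cc * η * (c * (c * u + d))) / ((c : ℂ) ^ 2 * cc * η) := by
    rw [hzp]
    field_simp [hc, hcc, hη']
    ring
  have hum2 : u - zm = (((b : ℂ) * c - a * d) + cc * η * (c * (c * u + d))) / ((c : ℂ) ^ 2 * cc * η) := by
    rw [hzm]
    field_simp [hc, hcc, hη']
    ring
  have hNp : ((b : ℂ) * c - a * d) - cc * η * (c * (c * u + d)) ≠ 0 := by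
    intro h
    apply hup'
    rw [hup2, h]
    simp
  have hNm : ((b : ℂ) * c - a * d) + cc * η * (c * (c * u + d)) ≠ 0 := by
    intro h
    apply hum'
    rw [hum2, h]
    simp
  have hfp : (((a : ℂ) * u + b) / ((c : ℂ) * u + d)) - ztp
      = (((b : ℂ) * c - a * d) - cc * η * (c * (c * u + d))) / (c * (c * u + d)) := by
    rw [hztp, eq_div_iff (mul_ne_zero hc hu)]
    linear_combination (c : ℂ) * div_mul_cancel₀ ((a : ℂ) * u + b) hu - ((c : ℂ) * u + d) * div_mul_cancel₀ (a : ℂ) hc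
  have hfm : (((a : ℂ) * u + b) / ((c : ℂ) * u + d)) - ztm
      = (((b : ℂ) * c - a * d) + cc * η * (c * (c * u + d))) / (c * (c * u + d)) := by
    rw [hztm, eq_div_iff (mul_ne_zero hc hu)]
    linear_combination (c : ℂ) * div_mul_cancel₀ ((a : ℂ) * u + b) hu - ((c : ℂ) * u + d) * div_mul_cancel₀ (a : ℂ) hc
  have hf0 : (((a : ℂ) * u + b) / ((c : ℂ) * u + d)) - (a : ℂ) / c
      = ((b : ℂ) * c - a * d) / (c * (c * u + d)) := by
    rw [eq_div_iff (mul_ne_zero hc hu)]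
    linear_combination (c : ℂ) * div_mul_cancel₀ ((a : ℂ) * u + b) hu - ((c : ℂ) * u + d) * div_mul_cancel₀ (a : ℂ) hc
  have hg : 1 / (2 * cc * γ) = -linf * ((a : ℂ) * d - b * c) / (2 * cc * η * c ^ 2) := by
    rw [hγ, hlt1]
    rw [div_div_eq_mul_div]
    field_simp [hc, hcc, hη', hlinf, hdet]
  have hE : (c : ℂ) * (c * u + d) ≠ 0 := mul_ne_zero hc hu
  have hD : (c : ℂ) ^ 2 * cc * η ≠ 0 := by
    exact mul_ne_zero (mul_ne_zero (pow_ne_zero 2 hc) hcc) hη'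
  rw [hfp, hfm, hf0, hup2, hum2, hlt1, one_div_div, one_div_div, one_div_div, one_div_div,
    div_pow, div_div_eq_mul_div, hg]
  have hNpNm : (((b : ℂ) * c - a * d) - cc * η * (c * (c * u + d))) *
      (((b : ℂ) * c - a * d) + cc * η * (c * (c * u + d))) ≠ 0 := mul_ne_zero hNp hNm
  have h2c : (2 : ℂ) * cc * (η : ℂ) * c ^ 2 ≠ 0 :=
    mul_ne_zero (mul_ne_zero (mul_ne_zero two_ne_zero hcc) hη') (pow_ne_zero 2 hc)
  have hA : (2 : ℂ) * cc * (η : ℂ) * c ^ 2 *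
      ((((b : ℂ) * c - a * d) - cc * η * (c * (c * u + d))) *
        (((b : ℂ) * c - a * d) + cc * η * (c * (c * u + d)))) ≠ 0 := mul_ne_zero h2c hNpNm
  have hB : (c : ℂ) ^ 2 * ((b : ℂ) * c - a * d) ^ 2 ≠ 0 :=
    mul_ne_zero (pow_ne_zero 2 hc) (pow_ne_zero 2 hdet')
  have hQ2 : ((c : ℂ) * u + d) ^ 2 ≠ 0 := pow_ne_zero 2 hu
  have hBig : (2 : ℂ) * cc * (η : ℂ) * c ^ 2 *
      ((((b : ℂ) * c - a * d) - cc * η * (c * (c * u + d))) *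
        (((b : ℂ) * c - a * d) + cc * η * (c * (c * u + d)))) *
      ((c : ℂ) ^ 2 * ((b : ℂ) * c - a * d) ^ 2) * ((c : ℂ) * u + d) ^ 2 ≠ 0 :=
    mul_ne_zero (mul_ne_zero hA hB) hQ2
  have hNp' : -(((b : ℂ) * c - a * d) - cc * η * (c * (c * u + d))) ≠ 0 := neg_ne_zero.mpr hNp
  have hDen2 : (2 : ℂ) * cc * (η : ℂ) * c ^ 2 *
      (-(((b : ℂ) * c - a * d) - cc * η * (c * (c * u + d))) *
        (((b : ℂ) * c - a * d) + cc * η * (c * (c * u + d)))) ≠ 0 :=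
    mul_ne_zero h2c (mul_ne_zero hNp' hNm)
  trans (-linf * (cc * η * (c * (c * u + d))) ^ 2 /
      ((((b : ℂ) * c - a * d) - cc * η * (c * (c * u + d))) *
        (((b : ℂ) * c - a * d) + cc * η * (c * (c * u + d)))))
  · rw [div_sub_div _ _ hNp hNm, div_mul_div_comm, div_mul_eq_mul_div, div_mul_eq_mul_div,
      div_div, div_sub_div _ _ hA hB, ← mul_div_assoc, div_div, div_eq_div_iff hBig hNpNm]
    ring
  · rw [div_sub_div _ _ hNp' hNm, div_mul_div_comm, div_add' _ _ _ hDen2,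
      div_eq_div_iff hNpNm hDen2]
    ring
end
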